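/- The class of MSGs that are language-equivalent to some local-choice MSG forms a proper subset of the class of MSGs that are language-equivalent to some controllable-choice MSG. -/

import Mathlib

namespace MSC

/-! ## Actions (the alphabet Σ) -/

/-- An action: `send p q m` is `p!q(m)` (process `p` sends a message with
label `m` to process `q`); `recv p q m` is `p?q(m)` (process `p` receives
a message with label `m` from process `q`). -/
inductive Action (P C : Type) where
  | send (p q : P) (m : C)
  | recv (p q : P) (m : C)

namespace Action

/-- The process executing the action. -/
def active {P C : Type} : Action P C → P
  | .send p _ _ => p
  | .recv p _ _ => p

/-- Relabel the message content of an action. -/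
def mapLbl {P C C' : Type} (f : C → C') : Action P C → Action P C'
  | .send p q m => .send p q (f m)
  | .recv p q m => .recv p q (f m)

end Action

/-! ## basic Message Sequence Charts -/

/-- The data of a basic Message Sequence Chart over an event universe `ι`,
processes `P` and message labels `C`: a finite set `E` of events, a
per-process order `procLt` (the union of the total orders `<_p`), a
classification of events into sends (`isSend e = true`) and receives, a map
`proc` assigning each event its process, a pairing `partner` relating each
send with its receive (and vice versa), and a labeling `lbl` of events by
the label of their message. -/
structure PreBMSC (ι P C : Type) where
  E : Finset ι
  procLt : ι → ι → Prop
  isSend : ι → Bool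
  proc : ι → P
  partner : ι → ι
  lbl : ι → C

namespace PreBMSC

variable {ι P C : Type}

/-- The message relation: `(e, partner e)` for each send event `e`. -/
def msgRel (M : PreBMSC ι P C) (e f : ι) : Prop :=
  e ∈ M.E ∧ M.isSend e = true ∧ f = M.partner e

/-- The visual order: the reflexive and transitive closure of the message
pairing together with the per-process orders. -/
def vis (M : PreBMSC ι P C) : ι → ι → Prop :=
  Relation.ReflTransGen (fun e f => M.msgRel e f ∨ M.procLt e f)

/-- The conditions making the data of a `PreBMSC` an actual bMSC: `procLt`
is a (strict) total order on the events of each process, `partner` is an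
involutive pairing of sends with receives of a different process preserving
labels, the visual order is a partial order (antisymmetry), and the FIFO
condition holds. -/
structure IsBMSC (M : PreBMSC ι P C) : Prop where
  procLt_mem : ∀ e f, M.procLt e f → e ∈ M.E ∧ f ∈ M.E ∧ M.proc e = M.proc f
  procLt_irrefl : ∀ e, ¬ M.procLt e e
  procLt_trans : ∀ e f g, M.procLt e f → M.procLt f g → M.procLt e g
  procLt_total : ∀ e ∈ M.E, ∀ f ∈ M.E, M.proc e = M.proc f → e ≠ f →
      M.procLt e f ∨ M.procLt f e
  partner_mem : ∀ e ∈ M.E, M.partner e ∈ M.E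
  partner_invol : ∀ e ∈ M.E, M.partner (M.partner e) = e
  partner_kind : ∀ e ∈ M.E, M.isSend (M.partner e) = !M.isSend e
  partner_proc : ∀ e ∈ M.E, M.proc (M.partner e) ≠ M.proc e
  partner_lbl : ∀ e ∈ M.E, M.lbl (M.partner e) = M.lbl e
  vis_antisymm : ∀ e f, M.vis e f → M.vis f e → e = f
  fifo : ∀ e e', M.isSend e = true → M.isSend e' = true → M.procLt e e' →
      M.proc (M.partner e) = M.proc (M.partner e') →
      M.procLt (M.partner e) (M.partner e')

/-- The letter of the alphabet `Σ` corresponding to an event. -/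
def act (M : PreBMSC ι P C) (e : ι) : Action P C :=
  if M.isSend e then Action.send (M.proc e) (M.proc (M.partner e)) (M.lbl e)
  else Action.recv (M.proc e) (M.proc (M.partner e)) (M.lbl e)

/-- `es` is a linearization (as a sequence of events) of `M`: a total order
of the events of `M` consistent with the visual order. -/
def IsLin [DecidableEq ι] (M : PreBMSC ι P C) (es : List ι) : Prop :=
  es.Nodup ∧ es.toFinset = M.E ∧ ∀ e f, M.vis e f → es.idxOf e ≤ es.idxOf f

/-- The language of a bMSC: all its linearizations, as words over `Σ`. -/
def lang [DecidableEq ι] (M : PreBMSC ι P C) : Set (List (Action P C)) :=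
  { w | ∃ es : List ι, M.IsLin es ∧ w = es.map M.act }

/-- Process `p` initiates `M` if some event of `p` is minimal in the
visual order of `M`. -/
def initiates (M : PreBMSC ι P C) (p : P) : Prop :=
  ∃ e ∈ M.E, M.proc e = p ∧ ∀ f, M.vis f e → f = e

/-- A send event `e` of `M` is a resolving event for a set `P'` of processes
iff for every `p ∈ P'` there is an event of `p` above `e` in the visual order. -/
def IsResolving (M : PreBMSC ι P C) (P' : Set P) (e : ι) : Prop :=
  e ∈ M.E ∧ M.isSend e = true ∧ ∀ p ∈ P', ∃ f ∈ M.E, M.proc f = p ∧ M.vis e f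

/-- `M` contains a resolving event for `P'`. -/
def HasResolving (M : PreBMSC ι P C) (P' : Set P) : Prop :=
  ∃ e, M.IsResolving P' e

/-- `es` is the projection of `M` onto process `p`: the sequence of events
executed by `p` in `M`, in their order of execution. -/
def IsProjection [DecidableEq ι] [DecidableEq P] (M : PreBMSC ι P C) (p : P)
    (es : List ι) : Prop :=
  es.Nodup ∧ es.toFinset = M.E.filter (fun e => M.proc e = p) ∧ es.Pairwise M.procLt

/-- Sequential (weak) composition of two bMSCs: events of the first chart
precede the events of the second chart on each process. -/
def comp [DecidableEq ι] (M₁ M₂ : PreBMSC ι P C) : PreBMSC ι P C where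
  E := M₁.E ∪ M₂.E
  procLt e f := M₁.procLt e f ∨ M₂.procLt e f ∨
    (e ∈ M₁.E ∧ f ∈ M₂.E ∧ M₁.proc e = M₂.proc f)
  isSend e := if e ∈ M₁.E then M₁.isSend e else M₂.isSend e
  proc e := if e ∈ M₁.E then M₁.proc e else M₂.proc e
  partner e := if e ∈ M₁.E then M₁.partner e else M₂.partner e
  lbl e := if e ∈ M₁.E then M₁.lbl e else M₂.lbl e

/-- Renaming of the events of `M` by tagging them with an index `i`
(used to make event sets of the copies along a path disjoint). -/
def tag [DecidableEq ι] (M : PreBMSC ι P C) (i : ℕ) : PreBMSC (ℕ × ι) P C where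
  E := M.E.image (fun e => (i, e))
  procLt e f := e.1 = i ∧ f.1 = i ∧ M.procLt e.2 f.2
  isSend e := M.isSend e.2
  proc e := M.proc e.2
  partner e := (i, M.partner e.2)
  lbl e := M.lbl e.2

/-- The empty bMSC. -/
noncomputable def emptyPre [Nonempty P] [Nonempty C] : PreBMSC ι P C where
  E := ∅
  procLt _ _ := False
  isSend _ := true
  proc _ := Classical.arbitrary P
  partner := id
  lbl _ := Classical.arbitrary C

end PreBMSC

/-! ## Message Sequence Graphs -/

/-- A Message Sequence Graph: a finite directed graph with an initial state
`s0` (no incoming edges), a terminal state `sf` (no outgoing edges), every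
state reachable from `s0`, `sf` reachable from every state, and each state
labeled by a bMSC. -/
structure MSG (ι P C : Type) where
  S : Type
  finS : Finite S
  edge : S → S → Prop
  s0 : S
  sf : S
  lab : S → PreBMSC ι P C
  lab_valid : ∀ s, (lab s).IsBMSC
  s0_no_incoming : ∀ s, ¬ edge s s0
  sf_no_outgoing : ∀ s, ¬ edge sf s
  reachable_from_s0 : ∀ s, Relation.ReflTransGen edge s0 s
  sf_reachable : ∀ s, Relation.ReflTransGen edge s sf

namespace MSG

variable {ι P C : Type} [DecidableEq ι] [Nonempty P] [Nonempty C]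

/-- A path: a nonempty sequence of states along edges. -/
def IsPath (G : MSG ι P C) (σ : List G.S) : Prop :=
  σ ≠ [] ∧ σ.Chain' G.edge

/-- A run: a path from the initial state to the terminal state. -/
def IsRun (G : MSG ι P C) (σ : List G.S) : Prop :=
  σ.Chain' G.edge ∧ σ.head? = some G.s0 ∧ σ.getLast? = some G.sf

/-- The bMSC labeling a path: the sequential composition of (disjointly
renamed copies of) the bMSCs labeling its states. -/
noncomputable def pathLabel (G : MSG ι P C) (σ : List G.S) : PreBMSC (ℕ × ι) P C :=
  ((σ.zipIdx.map Prod.swap).map (fun is => (G.lab is.2).tag is.1)).foldl PreBMSC.comp PreBMSC.emptyPre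

/-- The language of an MSG: the linearizations of the bMSCs labeling its runs. -/
def lang (G : MSG ι P C) : Set (List (Action P C)) :=
  { w | ∃ σ : List G.S, G.IsRun σ ∧ w ∈ (G.pathLabel σ).lang }

/-- `triggers s`: the processes initiating the communication after node `s`. -/
def triggers (G : MSG ι P C) (s : G.S) : Set P :=
  { p | ∃ (s1 : G.S) (σ' : List G.S), G.edge s s1 ∧ (s1 :: σ').Chain' G.edge ∧
        (G.pathLabel (s1 :: σ')).initiates p }

/-- A choice node: a node with more than one outgoing edge. -/
def IsChoice (G : MSG ι P C) (u : G.S) : Prop :=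
  ∃ v w, G.edge u v ∧ G.edge u w ∧ v ≠ w

/-- A local-choice node: a choice node whose `triggers` set is a singleton. -/
def IsLocalChoice (G : MSG ι P C) (u : G.S) : Prop :=
  G.IsChoice u ∧ ∃ p, G.triggers u = {p}

/-- A controllable-choice node: a choice node `u` such that every path from
`s0` to `u`, and every path starting in a successor of `u` and ending in `u`,
is labeled by a bMSC containing a resolving event for `triggers u`. -/
def IsControllableChoice (G : MSG ι P C) (u : G.S) : Prop :=
  G.IsChoice u ∧
  (∀ σ : List G.S, σ.Chain' G.edge → σ.head? = some G.s0 → σ.getLast? = some u →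
      (G.pathLabel σ).HasResolving (G.triggers u)) ∧
  (∀ (s1 : G.S) (σ' : List G.S), G.edge u s1 → (s1 :: σ').Chain' G.edge →
      (s1 :: σ').getLast? = some u →
      (G.pathLabel (s1 :: σ')).HasResolving (G.triggers u))

/-- A local-choice MSG: every choice node is local-choice. -/
def LocalChoice (G : MSG ι P C) : Prop :=
  ∀ u, G.IsChoice u → G.IsLocalChoice u

/-- A controllable-choice MSG: every choice node is local-choice or
controllable-choice. -/
def ControllableChoice (G : MSG ι P C) : Prop :=
  ∀ u, G.IsChoice u → G.IsLocalChoice u ∨ G.IsControllableChoice u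

/-- The end condition for (non-initial) prediction paths: the last node is
a local-choice node, or a controllable-choice node occurring earlier on the
path, or the terminal node. -/
def PredEnd (G : MSG ι P C) (σ : List G.S) : Prop :=
  ∃ u, σ.getLast? = some u ∧
    (G.IsLocalChoice u ∨ (G.IsControllableChoice u ∧ u ∈ σ.dropLast) ∨ u = G.sf)

/-- `σ` is the longest common prefix of all runs of `G` (the `initialPath`). -/
def IsInitialPath (G : MSG ι P C) (σ : List G.S) : Prop :=
  (∀ ρ, G.IsRun ρ → σ <+: ρ) ∧
  ∀ σ' : List G.S, (∀ ρ, G.IsRun ρ → σ' <+: ρ) → σ'.length ≤ σ.length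

/-- A prediction path: either the `initialPath`, or a shortest path (among
paths with the same first node) satisfying the end condition `PredEnd`. -/
def IsPredictionPath (G : MSG ι P C) (σ : List G.S) : Prop :=
  G.IsInitialPath σ ∨
  (σ ≠ [] ∧ σ.Chain' G.edge ∧ G.PredEnd σ ∧
    ∀ σ' : List G.S, σ' ≠ [] → σ'.Chain' G.edge → σ'.head? = σ.head? →
      G.PredEnd σ' → σ.length ≤ σ'.length)

end MSG

/-! ## Communicating Finite-State Machines -/

/-- A Communicating Finite-State Machine: a family of finite-state machines
`(A_p)_{p ∈ P}`, each with a local initial state, local accepting states and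
a transition relation over actions executed by `p`. -/
structure CFM (P C : Type) where
  St : P → Type
  finSt : ∀ p, Finite (St p)
  init : ∀ p, St p
  acc : ∀ p, Set (St p)
  trans : ∀ p, St p → Action P C → St p → Prop
  trans_active : ∀ p s a s', trans p s a s' → a.active = p

namespace CFM

variable {P C : Type}

/-- A configuration of a CFM: local states of all machines together with the
contents of the FIFO channels (`chan p q` is the channel from `p` to `q`). -/
structure Config (A : CFM P C) where
  st : ∀ p, A.St p
  chan : P → P → List C

/-- One step of a CFM: a send enqueues its label at the end of the channel,
a receive dequeues its label from the head of the channel. -/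
def Step (A : CFM P C) (c : A.Config) (a : Action P C) (c' : A.Config) : Prop :=
  match a with
  | .send p q m =>
      A.trans p (c.st p) a (c'.st p) ∧ (∀ r, r ≠ p → c'.st r = c.st r) ∧
      c'.chan p q = c.chan p q ++ [m] ∧
      (∀ x y, ¬(x = p ∧ y = q) → c'.chan x y = c.chan x y)
  | .recv p q m =>
      A.trans p (c.st p) a (c'.st p) ∧ (∀ r, r ≠ p → c'.st r = c.st r) ∧
      c.chan q p = m :: c'.chan q p ∧
      (∀ x y, ¬(x = q ∧ y = p) → c'.chan x y = c.chan x y)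

/-- Multi-step executions of a CFM, labeled by the word of executed actions. -/
inductive Exec (A : CFM P C) : A.Config → List (Action P C) → A.Config → Prop
  | refl (c : A.Config) : Exec A c [] c
  | step {c : A.Config} {a : Action P C} {c' : A.Config} {w : List (Action P C)}
      {c'' : A.Config} :
      A.Step c a c' → Exec A c' w c'' → Exec A c (a :: w) c''

/-- The initial configuration: all machines in their initial states, all
channels empty. -/
def initConfig (A : CFM P C) : A.Config := ⟨A.init, fun _ _ => []⟩

/-- An accepting configuration: every machine in an accepting state and all
channels empty. -/
def Accepting (A : CFM P C) (c : A.Config) : Prop :=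
  (∀ p, c.st p ∈ A.acc p) ∧ ∀ p q, c.chan p q = []

/-- The language of a CFM: words labeling executions from the initial
configuration to an accepting configuration. -/
def lang (A : CFM P C) : Set (List (Action P C)) :=
  { w | ∃ c, A.Exec A.initConfig w c ∧ A.Accepting c }

/-- Deadlock-freedom: from every reachable configuration an accepting
configuration is reachable. -/
def DeadlockFree (A : CFM P C) : Prop :=
  ∀ c w, A.Exec A.initConfig w c → ∃ w' c', A.Exec c w' c' ∧ A.Accepting c'

/-- The local machine `A_p` accepts the word `w` from state `s`. -/
def LocalAccept (A : CFM P C) (p : P) : A.St p → List (Action P C) → Prop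
  | s, [] => s ∈ A.acc p
  | s, a :: w => ∃ s', A.trans p s a s' ∧ LocalAccept A p s' w

/-- The language of the single finite-state machine `A_p`. -/
def localLang (A : CFM P C) (p : P) : Set (List (Action P C)) :=
  { w | A.LocalAccept p (A.init p) w }

end CFM

/-! ## Well-formed and complete words -/

/-- The sequence of labels sent from `p` to `q` in the word `w`. -/
def sendsOn {P C : Type} [DecidableEq P] (p q : P) (w : List (Action P C)) :
    List C :=
  w.filterMap fun a => match a with
    | .send p' q' m => if p' = p ∧ q' = q then some m else none
    | _ => none

/-- The sequence of labels received by `q` from `p` in the word `w`. -/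
def recvsOn {P C : Type} [DecidableEq P] (p q : P) (w : List (Action P C)) :
    List C :=
  w.filterMap fun a => match a with
    | .recv q' p' m => if q' = q ∧ p' = p then some m else none
    | _ => none

/-- A word is well-formed iff in every prefix every receive has a matching
earlier send (FIFO matching on each channel). -/
def WellFormed {P C : Type} [DecidableEq P] (w : List (Action P C)) : Prop :=
  ∀ v, v <+: w → ∀ p q : P, recvsOn p q v <+: sendsOn p q v

/-- A word is complete iff every send has a matching receive. -/
def Complete {P C : Type} [DecidableEq P] (w : List (Action P C)) : Prop :=
  ∀ p q : P, sendsOn p q w = recvsOn p q w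

end MSC

/-! ## Auxiliary infrastructure -/

namespace MSC

namespace PreBMSC

variable {ι P C : Type}

lemma act_eq_send {M : PreBMSC ι P C} {e : ι} {a b : P} {m : C}
    (h : M.act e = Action.send a b m) : M.isSend e = true ∧ M.proc e = a := by
  unfold act at h
  split_ifs at h with hs
  simp only [Action.send.injEq] at h
  exact ⟨hs, h.1⟩

lemma act_eq_recv {M : PreBMSC ι P C} {e : ι} {a b : P} {m : C}
    (h : M.act e = Action.recv a b m) : M.isSend e = false ∧ M.proc e = a := by
  unfold act at h
  split_ifs at h with hs
  simp only [Action.recv.injEq] at h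
  exact ⟨by simpa using hs, h.1⟩

lemma mem_tag_E [DecidableEq ι] {M : PreBMSC ι P C} {i : ℕ} {e : ℕ × ι} :
    e ∈ (M.tag i).E ↔ e.1 = i ∧ e.2 ∈ M.E := by
  unfold tag
  simp only [Finset.mem_image]
  constructor
  · rintro ⟨a, ha, rfl⟩; exact ⟨rfl, ha⟩
  · rintro ⟨h1, h2⟩; exact ⟨e.2, h2, by rw [← h1]⟩

end PreBMSC

namespace MSG

open PreBMSC

variable (G : MSG ℕ Bool Bool)

lemma pathLabel_nil : G.pathLabel [] = PreBMSC.emptyPre := rfl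

lemma pathLabel_snoc (σ : List G.S) (s : G.S) :
    G.pathLabel (σ ++ [s]) = PreBMSC.comp (G.pathLabel σ) ((G.lab s).tag σ.length) := by
  unfold pathLabel
  rw [List.zipIdx_append, List.map_append, List.map_append, List.foldl_append, Nat.zero_add]
  rfl

lemma mem_pathLabel_E {σ : List G.S} {e : ℕ × ℕ} :
    e ∈ (G.pathLabel σ).E ↔ ∃ s, σ[e.1]? = some s ∧ e.2 ∈ (G.lab s).E := by
  induction σ using List.reverseRecOn with
  | nil =>
    simp only [pathLabel_nil, PreBMSC.emptyPre, List.getElem?_nil]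
    simp
  | append_singleton σ t ih =>
    rw [pathLabel_snoc]
    show e ∈ (G.pathLabel σ).E ∪ ((G.lab t).tag σ.length).E ↔ _
    rw [Finset.mem_union, ih, mem_tag_E]
    constructor
    · rintro (⟨s, hs, h2⟩ | ⟨h1, h2⟩)
      · have hlt : e.1 < σ.length := by
          by_contra hge
          rw [List.getElem?_eq_none (Nat.le_of_not_lt hge)] at hs
          exact nomatch hs
        exact ⟨s, by rw [List.getElem?_append (l₂ := [t]), if_pos hlt]; exact hs, h2⟩
      · refine ⟨t, ?_, h2⟩
        rw [h1, List.getElem?_append_right (le_refl _)]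
        simp
    · rintro ⟨s, hs, h2⟩
      rcases Nat.lt_or_ge e.1 σ.length with hlt | hge
      · rw [List.getElem?_append (l₂ := [t]), if_pos hlt] at hs
        exact Or.inl ⟨s, hs, h2⟩
      · rw [List.getElem?_append_right hge] at hs
        have h1 : e.1 = σ.length := by
          rcases Nat.lt_or_ge (e.1 - σ.length) 1 with h | h
          · omega
          · rw [List.getElem?_eq_none (by simpa using h)] at hs
            exact nomatch hs
        have : e.1 - σ.length = 0 := by omega
        rw [this] at hs
        simp at hs
        exact Or.inr ⟨h1, hs ▸ h2⟩

lemma pathLabel_fields {σ : List G.S} {e : ℕ × ℕ} {s : G.S}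
    (hs : σ[e.1]? = some s) (he : e.2 ∈ (G.lab s).E) :
    (G.pathLabel σ).isSend e = (G.lab s).isSend e.2 ∧
    (G.pathLabel σ).proc e = (G.lab s).proc e.2 ∧
    (G.pathLabel σ).partner e = (e.1, (G.lab s).partner e.2) ∧
    (G.pathLabel σ).lbl e = (G.lab s).lbl e.2 := by
  induction σ using List.reverseRecOn with
  | nil => simp at hs
  | append_singleton σ t ih =>
    rw [pathLabel_snoc]
    rcases Nat.lt_or_ge e.1 σ.length with hlt | hge
    · rw [List.getElem?_append (l₂ := [t]), if_pos hlt] at hs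
      have hmem : e ∈ (G.pathLabel σ).E := (G.mem_pathLabel_E).2 ⟨s, hs, he⟩
      have h1 : (PreBMSC.comp (G.pathLabel σ) ((G.lab t).tag σ.length)).isSend e
          = (G.pathLabel σ).isSend e := if_pos hmem
      have h2 : (PreBMSC.comp (G.pathLabel σ) ((G.lab t).tag σ.length)).proc e
          = (G.pathLabel σ).proc e := if_pos hmem
      have h3 : (PreBMSC.comp (G.pathLabel σ) ((G.lab t).tag σ.length)).partner e
          = (G.pathLabel σ).partner e := if_pos hmem
      have h4 : (PreBMSC.comp (G.pathLabel σ) ((G.lab t).tag σ.length)).lbl e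
          = (G.pathLabel σ).lbl e := if_pos hmem
      rw [h1, h2, h3, h4]
      exact ih hs
    · rw [List.getElem?_append_right hge] at hs
      have h1 : e.1 = σ.length := by
        rcases Nat.lt_or_ge (e.1 - σ.length) 1 with h | h
        · omega
        · rw [List.getElem?_eq_none (by simpa using h)] at hs
          exact nomatch hs
      have h0 : e.1 - σ.length = 0 := by omega
      rw [h0] at hs; simp at hs
      have hnmem : e ∉ (G.pathLabel σ).E := by
        rw [G.mem_pathLabel_E]
        rintro ⟨s', hs', _⟩
        rw [List.getElem?_eq_none (h1 ▸ le_refl _)] at hs'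
        exact nomatch hs'
      have g1 : (PreBMSC.comp (G.pathLabel σ) ((G.lab t).tag σ.length)).isSend e
          = ((G.lab t).tag σ.length).isSend e := if_neg hnmem
      have g2 : (PreBMSC.comp (G.pathLabel σ) ((G.lab t).tag σ.length)).proc e
          = ((G.lab t).tag σ.length).proc e := if_neg hnmem
      have g3 : (PreBMSC.comp (G.pathLabel σ) ((G.lab t).tag σ.length)).partner e
          = ((G.lab t).tag σ.length).partner e := if_neg hnmem
      have g4 : (PreBMSC.comp (G.pathLabel σ) ((G.lab t).tag σ.length)).lbl e
          = ((G.lab t).tag σ.length).lbl e := if_neg hnmem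
      rw [g1, g2, g3, g4]
      subst hs
      exact ⟨rfl, rfl, by rw [← h1]; rfl, rfl⟩

/-- Local (same-node) part of the `procLt` of a path label. -/
def PLoc (σ : List G.S) (e f : ℕ × ℕ) : Prop :=
  ∃ s, σ[e.1]? = some s ∧ f.1 = e.1 ∧ (G.lab s).procLt e.2 f.2

/-- Cross-node part of the `procLt` of a path label. -/
def PCross (σ : List G.S) (e f : ℕ × ℕ) : Prop :=
  ∃ s t, σ[e.1]? = some s ∧ σ[f.1]? = some t ∧ e.1 < f.1 ∧
    e.2 ∈ (G.lab s).E ∧ f.2 ∈ (G.lab t).E ∧ (G.lab s).proc e.2 = (G.lab t).proc f.2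

lemma pathLabel_procLt_iff {σ : List G.S} {e f : ℕ × ℕ} :
    (G.pathLabel σ).procLt e f ↔ G.PLoc σ e f ∨ G.PCross σ e f := by
  induction σ using List.reverseRecOn with
  | nil =>
    simp only [pathLabel_nil, PreBMSC.emptyPre, PLoc, PCross, List.getElem?_nil]
    simp
  | append_singleton σ t ih =>
    rw [pathLabel_snoc]
    show (G.pathLabel σ).procLt e f ∨ ((G.lab t).tag σ.length).procLt e f ∨
      (e ∈ (G.pathLabel σ).E ∧ f ∈ ((G.lab t).tag σ.length).E ∧
        (G.pathLabel σ).proc e = ((G.lab t).tag σ.length).proc f) ↔ _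
    have hsome : ∀ (i : ℕ) (s : G.S), σ[i]? = some s → (σ ++ [t])[i]? = some s := by
      intro i s h
      have hlt : i < σ.length := by
        by_contra hge
        rw [List.getElem?_eq_none (Nat.le_of_not_lt hge)] at h
        exact nomatch h
      rw [List.getElem?_append (l₂ := [t]), if_pos hlt]; exact h
    have hlast : (σ ++ [t])[σ.length]? = some t := by
      rw [List.getElem?_append_right (le_refl _)]; simp
    have hback : ∀ (i : ℕ) (s : G.S), (σ ++ [t])[i]? = some s →
        (i < σ.length ∧ σ[i]? = some s) ∨ (i = σ.length ∧ s = t) := by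
      intro i s h
      rcases Nat.lt_or_ge i σ.length with hlt | hge
      · rw [List.getElem?_append (l₂ := [t]), if_pos hlt] at h
        exact Or.inl ⟨hlt, h⟩
      · rw [List.getElem?_append_right hge] at h
        have h1 : i = σ.length := by
          rcases Nat.lt_or_ge (i - σ.length) 1 with hh | hh
          · omega
          · rw [List.getElem?_eq_none (by simpa using hh)] at h
            exact nomatch h
        have h0 : i - σ.length = 0 := by omega
        rw [h0] at h; simp at h
        exact Or.inr ⟨h1, h.symm⟩
    constructor
    · rintro (h | h | ⟨he, hf, hp⟩)
      · rcases ih.1 h with ⟨s, hs, h1, h2⟩ | ⟨s, s', hs, hs', h1, h2, h3, h4⟩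
        · exact Or.inl ⟨s, hsome _ _ hs, h1, h2⟩
        · exact Or.inr ⟨s, s', hsome _ _ hs, hsome _ _ hs', h1, h2, h3, h4⟩
      · obtain ⟨h1, h2, h3⟩ := h
        exact Or.inl ⟨t, by rw [h1]; exact hlast, by rw [h2, h1], h3⟩
      · rcases (G.mem_pathLabel_E).1 he with ⟨s, hs, he2⟩
        rcases PreBMSC.mem_tag_E.1 hf with ⟨hf1, hf2⟩
        have hlt : e.1 < σ.length := by
          by_contra hge
          rw [List.getElem?_eq_none (Nat.le_of_not_lt hge)] at hs
          exact nomatch hs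
        refine Or.inr ⟨s, t, hsome _ _ hs, by rw [hf1]; exact hlast, by omega, he2, hf2, ?_⟩
        have := (G.pathLabel_fields hs he2).2.1
        rw [← this, hp]; rfl
    · rintro (⟨s, hs, h1, h2⟩ | ⟨s, s', hs, hs', h1, h2, h3, h4⟩)
      · rcases hback _ _ hs with ⟨hlt, hs0⟩ | ⟨hi, rfl⟩
        · exact Or.inl (ih.2 (Or.inl ⟨s, hs0, h1, h2⟩))
        · exact Or.inr (Or.inl ⟨hi, by omega, h2⟩)
      · rcases hback _ _ hs' with ⟨hlt', hs0'⟩ | ⟨hi', rfl⟩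
        · rcases hback _ _ hs with ⟨hlt, hs0⟩ | ⟨hi, rfl⟩
          · exact Or.inl (ih.2 (Or.inr ⟨s, s', hs0, hs0', h1, h2, h3, h4⟩))
          · omega
        · rcases hback _ _ hs with ⟨hlt, hs0⟩ | ⟨hi, rfl⟩
          · refine Or.inr (Or.inr ⟨(G.mem_pathLabel_E).2 ⟨s, hs0, h2⟩,
              PreBMSC.mem_tag_E.2 ⟨hi', h3⟩, ?_⟩)
            have := (G.pathLabel_fields hs0 h2).2.1
            rw [this, h4]; rfl
          · omega

lemma pathLabel_msgRel_iff {σ : List G.S} {e f : ℕ × ℕ} :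
    (G.pathLabel σ).msgRel e f ↔ ∃ s, σ[e.1]? = some s ∧ e.2 ∈ (G.lab s).E ∧
      (G.lab s).isSend e.2 = true ∧ f = (e.1, (G.lab s).partner e.2) := by
  unfold PreBMSC.msgRel
  constructor
  · rintro ⟨he, hsend, rfl⟩
    rcases (G.mem_pathLabel_E).1 he with ⟨s, hs, he2⟩
    obtain ⟨f1, _, f3, _⟩ := G.pathLabel_fields hs he2
    exact ⟨s, hs, he2, by rw [← f1]; exact hsend, f3⟩
  · rintro ⟨s, hs, he2, hsend, rfl⟩
    obtain ⟨f1, _, f3, _⟩ := G.pathLabel_fields hs he2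
    exact ⟨(G.mem_pathLabel_E).2 ⟨s, hs, he2⟩, by rw [f1]; exact hsend, f3.symm⟩

/-- One visual-order step of a path label. -/
def PStep (σ : List G.S) (e f : ℕ × ℕ) : Prop :=
  (G.pathLabel σ).msgRel e f ∨ (G.pathLabel σ).procLt e f

lemma pathLabel_vis_iff {σ : List G.S} {e f : ℕ × ℕ} :
    (G.pathLabel σ).vis e f ↔ Relation.ReflTransGen (G.PStep σ) e f := Iff.rfl

lemma pstep_mem {σ : List G.S} {e f : ℕ × ℕ} (h : G.PStep σ e f) :
    e ∈ (G.pathLabel σ).E ∧ f ∈ (G.pathLabel σ).E := by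
  rcases h with h | h
  · rcases (G.pathLabel_msgRel_iff).1 h with ⟨s, hs, he2, hsend, rfl⟩
    exact ⟨(G.mem_pathLabel_E).2 ⟨s, hs, he2⟩,
      (G.mem_pathLabel_E).2 ⟨s, hs, (G.lab_valid s).partner_mem _ he2⟩⟩
  · rcases (G.pathLabel_procLt_iff).1 h with ⟨s, hs, h1, h2⟩ | ⟨s, s', hs, hs', h1, h2, h3, h4⟩
    · obtain ⟨m1, m2, _⟩ := (G.lab_valid s).procLt_mem _ _ h2
      exact ⟨(G.mem_pathLabel_E).2 ⟨s, hs, m1⟩,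
        (G.mem_pathLabel_E).2 ⟨s, by rw [h1]; exact hs, m2⟩⟩
    · exact ⟨(G.mem_pathLabel_E).2 ⟨s, hs, h2⟩, (G.mem_pathLabel_E).2 ⟨s', hs', h3⟩⟩

lemma pathLabel_procLt_level {σ : List G.S} {e f : ℕ × ℕ}
    (h : (G.pathLabel σ).procLt e f) : e.1 ≤ f.1 := by
  rcases (G.pathLabel_procLt_iff).1 h with ⟨s, _, h1, _⟩ | ⟨_, _, _, _, h1, _⟩
  · omega
  · omega

lemma pathLabel_procLt_proc {σ : List G.S} {e f : ℕ × ℕ}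
    (h : (G.pathLabel σ).procLt e f) :
    (G.pathLabel σ).proc e = (G.pathLabel σ).proc f := by
  rcases (G.pathLabel_procLt_iff).1 h with ⟨s, hs, h1, h2⟩ | ⟨s, s', hs, hs', h1, h2, h3, h4⟩
  · obtain ⟨m1, m2, m3⟩ := (G.lab_valid s).procLt_mem _ _ h2
    rw [(G.pathLabel_fields hs m1).2.1, (G.pathLabel_fields (e := f) (by rw [h1]; exact hs) m2).2.1]
    exact m3
  · rw [(G.pathLabel_fields hs h2).2.1, (G.pathLabel_fields hs' h3).2.1]
    exact h4

lemma pathLabel_procLt_irrefl {σ : List G.S} {e : ℕ × ℕ} :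
    ¬ (G.pathLabel σ).procLt e e := by
  intro h
  rcases (G.pathLabel_procLt_iff).1 h with ⟨s, _, _, h2⟩ | ⟨_, _, _, _, h1, _⟩
  · exact (G.lab_valid s).procLt_irrefl _ h2
  · omega

lemma pathLabel_procLt_total {σ : List G.S} {e f : ℕ × ℕ}
    (he : e ∈ (G.pathLabel σ).E) (hf : f ∈ (G.pathLabel σ).E)
    (hp : (G.pathLabel σ).proc e = (G.pathLabel σ).proc f) (hne : e ≠ f) :
    (G.pathLabel σ).procLt e f ∨ (G.pathLabel σ).procLt f e := by
  rcases (G.mem_pathLabel_E).1 he with ⟨s, hs, he2⟩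
  rcases (G.mem_pathLabel_E).1 hf with ⟨s', hs', hf2⟩
  rw [(G.pathLabel_fields hs he2).2.1, (G.pathLabel_fields hs' hf2).2.1] at hp
  rcases Nat.lt_trichotomy e.1 f.1 with hlt | heq | hgt
  · exact Or.inl ((G.pathLabel_procLt_iff).2 (Or.inr ⟨s, s', hs, hs', hlt, he2, hf2, hp⟩))
  · have hss : s = s' := by
      rw [heq] at hs; rw [hs] at hs'; exact Option.some.inj hs'
    subst hss
    have hne2 : e.2 ≠ f.2 := by
      intro h2
      exact hne (Prod.ext heq h2)
    rcases (G.lab_valid s).procLt_total _ he2 _ hf2 hp hne2 with h | h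
    · exact Or.inl ((G.pathLabel_procLt_iff).2 (Or.inl ⟨s, hs, heq.symm, h⟩))
    · exact Or.inr ((G.pathLabel_procLt_iff).2 (Or.inl ⟨s, hs', heq, h⟩))
  · exact Or.inr ((G.pathLabel_procLt_iff).2 (Or.inr ⟨s', s, hs', hs, hgt, hf2, he2, hp.symm⟩))

/-- Level/local bound on the visual order of a path label. -/
def VBound (σ : List G.S) (e f : ℕ × ℕ) : Prop :=
  e.1 < f.1 ∨ (e.1 = f.1 ∧ ∃ s, σ[e.1]? = some s ∧ (G.lab s).vis e.2 f.2)

lemma pstep_vbound {σ : List G.S} {e f : ℕ × ℕ} (h : G.PStep σ e f) :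
    G.VBound σ e f := by
  rcases h with h | h
  · rcases (G.pathLabel_msgRel_iff).1 h with ⟨s, hs, he2, hsend, rfl⟩
    exact Or.inr ⟨rfl, s, hs, Relation.ReflTransGen.single (Or.inl ⟨he2, hsend, rfl⟩)⟩
  · rcases (G.pathLabel_procLt_iff).1 h with ⟨s, hs, h1, h2⟩ | ⟨s, s', hs, hs', h1, _⟩
    · exact Or.inr ⟨h1.symm, s, hs, Relation.ReflTransGen.single (Or.inr h2)⟩
    · exact Or.inl h1

lemma vbound_trans {σ : List G.S} {e f g : ℕ × ℕ}
    (h1 : G.VBound σ e f) (h2 : G.VBound σ f g) : G.VBound σ e g := by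
  rcases h1 with h1 | ⟨h1, s, hs, hv⟩
  · rcases h2 with h2 | ⟨h2, _⟩
    · exact Or.inl (by omega)
    · exact Or.inl (by omega)
  · rcases h2 with h2 | ⟨h2, s', hs', hv'⟩
    · exact Or.inl (by omega)
    · refine Or.inr ⟨by omega, s, hs, ?_⟩
      have hss : s' = s := by
        rw [← h1] at hs'; rw [hs'] at hs; exact Option.some.inj hs
      exact Relation.ReflTransGen.trans hv (hss ▸ hv')

lemma pathLabel_vis_bound {σ : List G.S} {e f : ℕ × ℕ}
    (h : (G.pathLabel σ).vis e f) :
    e = f ∨ (e ∈ (G.pathLabel σ).E ∧ f ∈ (G.pathLabel σ).E ∧ G.VBound σ e f) := by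
  rw [pathLabel_vis_iff] at h
  induction h with
  | refl => exact Or.inl rfl
  | tail hab hbc ih =>
    rename_i b c
    have hm := G.pstep_mem hbc
    have hv := G.pstep_vbound hbc
    rcases ih with rfl | ⟨he, _, hvb⟩
    · exact Or.inr ⟨hm.1, hm.2, hv⟩
    · exact Or.inr ⟨he, hm.2, G.vbound_trans hvb hv⟩

lemma pathLabel_act_eq {σ : List G.S} {e : ℕ × ℕ} {s : G.S}
    (hs : σ[e.1]? = some s) (he : e.2 ∈ (G.lab s).E) :
    (G.pathLabel σ).act e = (G.lab s).act e.2 := by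
  obtain ⟨f1, f2, f3, f4⟩ := G.pathLabel_fields hs he
  have hpm := (G.lab_valid s).partner_mem _ he
  obtain ⟨_, g2, _, _⟩ := G.pathLabel_fields (e := (e.1, (G.lab s).partner e.2)) hs hpm
  unfold PreBMSC.act
  rw [f1, f2, f3, f4, g2]

lemma min_of_no_step {σ : List G.S} {e : ℕ × ℕ}
    (h : ∀ c, ¬ G.PStep σ c e) : ∀ f, (G.pathLabel σ).vis f e → f = e := by
  intro f hf
  rcases Relation.ReflTransGen.cases_tail hf with h1 | ⟨c, _, hc⟩
  · exact h1.symm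
  · exact absurd hc (h c)

lemma pathLabel_partner_invol {σ : List G.S} {e : ℕ × ℕ} {s : G.S}
    (hs : σ[e.1]? = some s) (he : e.2 ∈ (G.lab s).E) :
    (G.pathLabel σ).partner ((G.pathLabel σ).partner e) = e := by
  obtain ⟨_, _, f3, _⟩ := G.pathLabel_fields hs he
  have hpm := (G.lab_valid s).partner_mem _ he
  obtain ⟨_, _, g3, _⟩ := G.pathLabel_fields (e := (e.1, (G.lab s).partner e.2)) hs hpm
  rw [f3, g3, (G.lab_valid s).partner_invol _ he]

end MSG

namespace MSG

open PreBMSC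

variable (G : MSG ℕ Bool Bool)

lemma idx_getElem {α : Type} [DecidableEq α] {es : List α} (h : es.Nodup) {i : ℕ}
    (hi : i < es.length) : es.idxOf es[i] = i := by
  have hm : es[i] ∈ es := List.getElem_mem hi
  have hlt : es.idxOf es[i] < es.length := List.idxOf_lt_length_iff.2 hm
  have := List.getElem_idxOf hlt
  exact (h.getElem_inj_iff.1 this)

lemma lin_getElem_mem {σ : List G.S} {es : List (ℕ × ℕ)}
    (hlin : (G.pathLabel σ).IsLin es) {i : ℕ} (hi : i < es.length) :
    es[i] ∈ (G.pathLabel σ).E := by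
  rw [← hlin.2.1, List.mem_toFinset]
  exact List.getElem_mem hi

lemma lin_idx_le {σ : List G.S} {es : List (ℕ × ℕ)}
    (hlin : (G.pathLabel σ).IsLin es) {i j : ℕ} (hi : i < es.length) (hj : j < es.length)
    (h : (G.pathLabel σ).vis es[i] es[j]) : i ≤ j := by
  have := hlin.2.2 _ _ h
  rwa [idx_getElem hlin.1 hi, idx_getElem hlin.1 hj] at this

lemma lin_eq_getElem {σ : List G.S} {es : List (ℕ × ℕ)}
    (hlin : (G.pathLabel σ).IsLin es) {e : ℕ × ℕ} (he : e ∈ (G.pathLabel σ).E) :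
    ∃ (k : ℕ) (hk : k < es.length), es[k] = e := by
  rw [← hlin.2.1, List.mem_toFinset, List.mem_iff_getElem] at he
  exact he

end MSG

end MSC

namespace MSC

namespace MSG

open PreBMSC

variable (G : MSG ℕ Bool Bool)

/-- Shift of event names used to compare a path label with the label of a suffix. -/
def shiftE (d : ℕ) (e : ℕ × ℕ) : ℕ × ℕ := (d + e.1, e.2)

lemma getElem?_shift (δ τ : List G.S) (i : ℕ) :
    (δ ++ τ)[δ.length + i]? = τ[i]? := by
  rw [List.getElem?_append_right (Nat.le_add_right _ _)]
  simp

lemma getElem?_low {δ τ : List G.S} {i : ℕ} (h : i < δ.length) :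
    (δ ++ τ)[i]? = δ[i]? := by
  rw [List.getElem?_append (l₂ := τ), if_pos h]

lemma transport_mem {δ τ : List G.S} {e : ℕ × ℕ} :
    e ∈ (G.pathLabel τ).E ↔ shiftE δ.length e ∈ (G.pathLabel (δ ++ τ)).E := by
  have hsh : ∀ s : G.S, ((δ ++ τ)[(shiftE δ.length e).1]? = some s) ↔ (τ[e.1]? = some s) := by
    intro s
    show ((δ ++ τ)[δ.length + e.1]? = some s) ↔ _
    rw [G.getElem?_shift]
  rw [mem_pathLabel_E, mem_pathLabel_E]
  constructor
  · rintro ⟨s, hs, h2⟩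
    exact ⟨s, (hsh s).2 hs, h2⟩
  · rintro ⟨s, hs, h2⟩
    exact ⟨s, (hsh s).1 hs, h2⟩

lemma transport_procLt {δ τ : List G.S} {e f : ℕ × ℕ}
    (h : (G.pathLabel τ).procLt e f) :
    (G.pathLabel (δ ++ τ)).procLt (shiftE δ.length e) (shiftE δ.length f) := by
  rw [pathLabel_procLt_iff] at h ⊢
  rcases h with ⟨s, hs, h1, h2⟩ | ⟨s, s', hs, hs', h1, h2, h3, h4⟩
  · refine Or.inl ⟨s, ?_, by unfold shiftE; rw [h1], h2⟩
    show (δ ++ τ)[δ.length + e.1]? = some s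
    rw [G.getElem?_shift]; exact hs
  · refine Or.inr ⟨s, s', ?_, ?_, by unfold shiftE; omega, h2, h3, h4⟩
    · show (δ ++ τ)[δ.length + e.1]? = some s
      rw [G.getElem?_shift]; exact hs
    · show (δ ++ τ)[δ.length + f.1]? = some s'
      rw [G.getElem?_shift]; exact hs'

lemma transport_msgRel {δ τ : List G.S} {e f : ℕ × ℕ}
    (h : (G.pathLabel τ).msgRel e f) :
    (G.pathLabel (δ ++ τ)).msgRel (shiftE δ.length e) (shiftE δ.length f) := by
  rw [pathLabel_msgRel_iff] at h ⊢
  rcases h with ⟨s, hs, h2, h3, rfl⟩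
  refine ⟨s, ?_, h2, h3, rfl⟩
  show (δ ++ τ)[δ.length + e.1]? = some s
  rw [G.getElem?_shift]; exact hs

lemma transport_step {δ τ : List G.S} {e f : ℕ × ℕ} (h : G.PStep τ e f) :
    G.PStep (δ ++ τ) (shiftE δ.length e) (shiftE δ.length f) := by
  rcases h with h | h
  · exact Or.inl (G.transport_msgRel h)
  · exact Or.inr (G.transport_procLt h)

lemma transport_proc {δ τ : List G.S} {e : ℕ × ℕ} {s : G.S}
    (hs : τ[e.1]? = some s) (he : e.2 ∈ (G.lab s).E) :
    (G.pathLabel τ).proc e = (G.pathLabel (δ ++ τ)).proc (shiftE δ.length e) := by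
  have hs' : (δ ++ τ)[(shiftE δ.length e).1]? = some s := by
    show (δ ++ τ)[δ.length + e.1]? = some s
    rw [G.getElem?_shift]; exact hs
  rw [(G.pathLabel_fields hs he).2.1, (G.pathLabel_fields hs' he).2.1]
  rfl

end MSG

end MSC

namespace MSC

namespace MSG

open PreBMSC

variable (G : MSG ℕ Bool Bool)

lemma partner_props {σ : List G.S} {e : ℕ × ℕ} (he : e ∈ (G.pathLabel σ).E) :
    (G.pathLabel σ).partner e ∈ (G.pathLabel σ).E ∧
    (G.pathLabel σ).isSend ((G.pathLabel σ).partner e) = !(G.pathLabel σ).isSend e ∧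
    (G.pathLabel σ).proc ((G.pathLabel σ).partner e) ≠ (G.pathLabel σ).proc e ∧
    ((G.pathLabel σ).partner e).1 = e.1 := by
  obtain ⟨s, hs, he2⟩ := (G.mem_pathLabel_E).1 he
  obtain ⟨f1, f2, f3, f4⟩ := G.pathLabel_fields hs he2
  have hpm := (G.lab_valid s).partner_mem _ he2
  obtain ⟨g1, g2, g3, g4⟩ := G.pathLabel_fields (e := (e.1, (G.lab s).partner e.2)) hs hpm
  rw [f3]
  refine ⟨(G.mem_pathLabel_E).2 ⟨s, hs, hpm⟩, ?_, ?_, rfl⟩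
  · rw [g1, f1]
    exact (G.lab_valid s).partner_kind _ he2
  · rw [g2, f2]
    exact (G.lab_valid s).partner_proc _ he2

end MSG

/-! ## The witness MSG -/

/-- The "crossing" bMSC: `p` sends to `q` and `q` sends to `p`. -/
def C1 : PreBMSC ℕ Bool Bool where
  E := {0, 1, 2, 3}
  procLt e f := (e = 0 ∧ f = 3) ∨ (e = 1 ∧ f = 2)
  isSend e := e == 0 || e == 1
  proc e := e == 0 || e == 3
  partner e := if e = 0 then 2 else if e = 1 then 3 else if e = 2 then 0 else 1
  lbl _ := true

/-- The empty bMSC. -/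
def E0 : PreBMSC ℕ Bool Bool where
  E := ∅
  procLt _ _ := False
  isSend _ := true
  proc _ := true
  partner := id
  lbl _ := true

lemma C1_step_bound {e f : ℕ} (h : C1.msgRel e f ∨ C1.procLt e f) :
    (e = 0 ∨ e = 1) ∧ (f = 2 ∨ f = 3) := by
  rcases h with ⟨he, hs, rfl⟩ | h
  · have he' : e = 0 ∨ e = 1 ∨ e = 2 ∨ e = 3 := by
      simpa [C1, Finset.mem_insert] using he
    rcases he' with rfl | rfl | rfl | rfl
    · exact ⟨Or.inl rfl, by decide⟩
    · exact ⟨Or.inr rfl, by decide⟩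
    · exact absurd hs (by decide)
    · exact absurd hs (by decide)
  · rcases h with ⟨rfl, rfl⟩ | ⟨rfl, rfl⟩
    · exact ⟨Or.inl rfl, Or.inr rfl⟩
    · exact ⟨Or.inr rfl, Or.inl rfl⟩

lemma C1_vis_bound {e f : ℕ} (h : C1.vis e f) :
    e = f ∨ ((e = 0 ∨ e = 1) ∧ (f = 2 ∨ f = 3)) := by
  rcases Relation.ReflTransGen.cases_head h with rfl | ⟨c, hc, hcf⟩
  · exact Or.inl rfl
  · have h1 := C1_step_bound hc
    rcases Relation.ReflTransGen.cases_head hcf with rfl | ⟨e', hd, _⟩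
    · exact Or.inr h1
    · have h2 := C1_step_bound hd
      rcases h1.2 with rfl | rfl <;> rcases h2.1 with h | h <;> omega

lemma C1_valid : C1.IsBMSC := by
  constructor
  · rintro e f (⟨rfl, rfl⟩ | ⟨rfl, rfl⟩) <;> exact ⟨by decide, by decide, by decide⟩
  · rintro e (⟨rfl, h⟩ | ⟨rfl, h⟩) <;> omega
  · rintro e f g (⟨rfl, rfl⟩ | ⟨rfl, rfl⟩) (⟨h1, h2⟩ | ⟨h1, h2⟩) <;> omega
  · intro e he f hf hp hne
    have he' : e = 0 ∨ e = 1 ∨ e = 2 ∨ e = 3 := by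
      simpa [C1, Finset.mem_insert] using he
    have hf' : f = 0 ∨ f = 1 ∨ f = 2 ∨ f = 3 := by
      simpa [C1, Finset.mem_insert] using hf
    rcases he' with rfl | rfl | rfl | rfl <;> rcases hf' with rfl | rfl | rfl | rfl <;>
      first
        | exact absurd rfl hne
        | exact absurd hp (by decide)
        | exact Or.inl (Or.inl ⟨rfl, rfl⟩)
        | exact Or.inl (Or.inr ⟨rfl, rfl⟩)
        | exact Or.inr (Or.inl ⟨rfl, rfl⟩)
        | exact Or.inr (Or.inr ⟨rfl, rfl⟩)
  · intro e he
    have he' : e = 0 ∨ e = 1 ∨ e = 2 ∨ e = 3 := by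
      simpa [C1, Finset.mem_insert] using he
    rcases he' with rfl | rfl | rfl | rfl <;> decide
  · intro e he
    have he' : e = 0 ∨ e = 1 ∨ e = 2 ∨ e = 3 := by
      simpa [C1, Finset.mem_insert] using he
    rcases he' with rfl | rfl | rfl | rfl <;> decide
  · intro e he
    have he' : e = 0 ∨ e = 1 ∨ e = 2 ∨ e = 3 := by
      simpa [C1, Finset.mem_insert] using he
    rcases he' with rfl | rfl | rfl | rfl <;> decide
  · intro e he
    have he' : e = 0 ∨ e = 1 ∨ e = 2 ∨ e = 3 := by
      simpa [C1, Finset.mem_insert] using he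
    rcases he' with rfl | rfl | rfl | rfl <;> decide
  · intro e he
    have he' : e = 0 ∨ e = 1 ∨ e = 2 ∨ e = 3 := by
      simpa [C1, Finset.mem_insert] using he
    rcases he' with rfl | rfl | rfl | rfl <;> decide
  · intro e f h1 h2
    rcases C1_vis_bound h1 with rfl | ⟨hb1, hb2⟩
    · rfl
    · rcases C1_vis_bound h2 with h | ⟨hb3, hb4⟩
      · omega
      · omega
  · intro e e' hse hse' hlt hpp
    rcases hlt with ⟨rfl, rfl⟩ | ⟨rfl, rfl⟩
    · exact absurd hse' (by decide)
    · exact absurd hse' (by decide)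

lemma E0_vis_eq {e f : ℕ} (h : E0.vis e f) : e = f := by
  rcases Relation.ReflTransGen.cases_head h with rfl | ⟨c, hc, _⟩
  · rfl
  · rcases hc with ⟨he, _⟩ | hc
    · simp [E0] at he
    · exact absurd hc (by simp [E0])

lemma E0_valid : E0.IsBMSC := by
  constructor
  · rintro e f ⟨⟩
  · rintro e ⟨⟩
  · rintro e f g ⟨⟩
  · intro e he
    simp [E0] at he
  · intro e he
    simp [E0] at he
  · intro e he
    simp [E0] at he
  · intro e he
    simp [E0] at he
  · intro e he
    simp [E0] at he
  · intro e he
    simp [E0] at he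
  · intro e f h1 _
    exact E0_vis_eq h1
  · rintro e e' _ _ ⟨⟩

/-- The witness controllable-choice MSG. -/
def GW : MSG ℕ Bool Bool where
  S := Fin 4
  finS := inferInstance
  edge x y := (x = 0 ∧ y = 1) ∨ (x = 1 ∧ y = 2) ∨ (x = 1 ∧ y = 3) ∨ (x = 2 ∧ y = 3)
  s0 := 0
  sf := 3
  lab s := if s = 0 ∨ s = 2 then C1 else E0
  lab_valid s := by
    split_ifs with h
    · exact C1_valid
    · exact E0_valid
  s0_no_incoming := by decide
  sf_no_outgoing := by decide
  reachable_from_s0 s := by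
    fin_cases s
    · exact .refl
    · exact .single (Or.inl ⟨rfl, rfl⟩)
    · exact .tail (b := 1) (.single (Or.inl ⟨rfl, rfl⟩)) (Or.inr (Or.inl ⟨rfl, rfl⟩))
    · exact .tail (b := 1) (.single (Or.inl ⟨rfl, rfl⟩)) (Or.inr (Or.inr (Or.inl ⟨rfl, rfl⟩)))
  sf_reachable s := by
    fin_cases s
    · exact .tail (b := 1) (.single (Or.inl ⟨rfl, rfl⟩)) (Or.inr (Or.inr (Or.inl ⟨rfl, rfl⟩)))
    · exact .single (Or.inr (Or.inr (Or.inl ⟨rfl, rfl⟩)))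
    · exact .single (Or.inr (Or.inr (Or.inr ⟨rfl, rfl⟩)))
    · exact .refl

end MSC

namespace MSC

open PreBMSC

instance (n : ℕ) [inst : OfNat (Fin 4) n] : OfNat GW.S n := inst

instance : DecidableEq GW.S := fun a b => (instDecidableEqFin 4) a b

instance : Fintype GW.S := Fin.fintype 4

lemma GW_lab0 : GW.lab 0 = C1 := by
  show (if ((0 : Fin 4) = 0 ∨ (0 : Fin 4) = 2) then C1 else E0) = C1
  rw [if_pos]; exact Or.inl rfl

lemma GW_lab1 : GW.lab 1 = E0 := by
  show (if ((1 : Fin 4) = 0 ∨ (1 : Fin 4) = 2) then C1 else E0) = E0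
  rw [if_neg]; decide

lemma GW_lab2 : GW.lab 2 = C1 := by
  show (if ((2 : Fin 4) = 0 ∨ (2 : Fin 4) = 2) then C1 else E0) = C1
  rw [if_pos]; exact Or.inr rfl

lemma GW_lab3 : GW.lab 3 = E0 := by
  show (if ((3 : Fin 4) = 0 ∨ (3 : Fin 4) = 2) then C1 else E0) = E0
  rw [if_neg]; decide

/-- Canonical linearization of the crossing pattern. -/
def wA : List (Action Bool Bool) :=
  [.send true false true, .send false true true, .recv false true true, .recv true false true]

def wB : List (Action Bool Bool) := wA ++ wA

def runA : List GW.S := [0, 1, 3]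
def runB : List GW.S := [0, 1, 2, 3]
def esA : List (ℕ × ℕ) := [(0,0), (0,1), (0,2), (0,3)]
def esB : List (ℕ × ℕ) := [(0,0), (0,1), (0,2), (0,3), (2,0), (2,1), (2,2), (2,3)]

lemma memA_iff {e : ℕ × ℕ} : e ∈ (GW.pathLabel runA).E ↔ e ∈ esA := by
  rw [GW.mem_pathLabel_E]
  constructor
  · rintro ⟨s, hs, h2⟩
    obtain ⟨i, x⟩ := e
    rcases i with _ | (_ | (_ | n))
    · rw [show runA[((0 : ℕ), x).1]? = some (0 : GW.S) from rfl] at hs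
      rw [(Option.some.inj hs).symm, GW_lab0] at h2
      have hx : x = 0 ∨ x = 1 ∨ x = 2 ∨ x = 3 := by
        simpa [C1, Finset.mem_insert] using h2
      rcases hx with rfl | rfl | rfl | rfl <;> simp [esA]
    · rw [show runA[((1 : ℕ), x).1]? = some (1 : GW.S) from rfl] at hs
      rw [(Option.some.inj hs).symm, GW_lab1] at h2
      simp [E0] at h2
    · rw [show runA[((2 : ℕ), x).1]? = some (3 : GW.S) from rfl] at hs
      rw [(Option.some.inj hs).symm, GW_lab3] at h2
      simp [E0] at h2
    · rw [List.getElem?_eq_none (show runA.length ≤ ((n + 3 : ℕ), x).1 by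
        simp only [runA, List.length_cons, List.length_nil]; omega)] at hs
      exact nomatch hs
  · intro h
    simp only [esA, List.mem_cons, List.not_mem_nil, or_false] at h
    rcases h with rfl | rfl | rfl | rfl <;>
      exact ⟨0, rfl, by rw [GW_lab0]; decide⟩

lemma memB_iff {e : ℕ × ℕ} : e ∈ (GW.pathLabel runB).E ↔ e ∈ esB := by
  rw [GW.mem_pathLabel_E]
  constructor
  · rintro ⟨s, hs, h2⟩
    obtain ⟨i, x⟩ := e
    rcases i with _ | (_ | (_ | (_ | n)))
    · rw [show runB[((0 : ℕ), x).1]? = some (0 : GW.S) from rfl] at hs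
      rw [(Option.some.inj hs).symm, GW_lab0] at h2
      have hx : x = 0 ∨ x = 1 ∨ x = 2 ∨ x = 3 := by
        simpa [C1, Finset.mem_insert] using h2
      rcases hx with rfl | rfl | rfl | rfl <;> simp [esB]
    · rw [show runB[((1 : ℕ), x).1]? = some (1 : GW.S) from rfl] at hs
      rw [(Option.some.inj hs).symm, GW_lab1] at h2
      simp [E0] at h2
    · rw [show runB[((2 : ℕ), x).1]? = some (2 : GW.S) from rfl] at hs
      rw [(Option.some.inj hs).symm, GW_lab2] at h2
      have hx : x = 0 ∨ x = 1 ∨ x = 2 ∨ x = 3 := by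
        simpa [C1, Finset.mem_insert] using h2
      rcases hx with rfl | rfl | rfl | rfl <;> simp [esB]
    · rw [show runB[((3 : ℕ), x).1]? = some (3 : GW.S) from rfl] at hs
      rw [(Option.some.inj hs).symm, GW_lab3] at h2
      simp [E0] at h2
    · rw [List.getElem?_eq_none (show runB.length ≤ ((n + 4 : ℕ), x).1 by
        simp only [runB, List.length_cons, List.length_nil]; omega)] at hs
      exact nomatch hs
  · intro h
    simp only [esB, List.mem_cons, List.not_mem_nil, or_false] at h
    rcases h with rfl | rfl | rfl | rfl | rfl | rfl | rfl | rfl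
    · exact ⟨0, rfl, by rw [GW_lab0]; decide⟩
    · exact ⟨0, rfl, by rw [GW_lab0]; decide⟩
    · exact ⟨0, rfl, by rw [GW_lab0]; decide⟩
    · exact ⟨0, rfl, by rw [GW_lab0]; decide⟩
    · exact ⟨2, rfl, by rw [GW_lab2]; decide⟩
    · exact ⟨2, rfl, by rw [GW_lab2]; decide⟩
    · exact ⟨2, rfl, by rw [GW_lab2]; decide⟩
    · exact ⟨2, rfl, by rw [GW_lab2]; decide⟩

lemma linA : (GW.pathLabel runA).IsLin esA := by
  refine ⟨by decide, ?_, ?_⟩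
  · ext e
    rw [List.mem_toFinset]
    exact memA_iff.symm
  · intro e f h
    rcases GW.pathLabel_vis_bound h with rfl | ⟨he, hf, hv⟩
    · exact le_refl _
    · rw [memA_iff] at he hf
      simp only [esA, List.mem_cons, List.not_mem_nil, or_false] at he hf
      rcases he with rfl | rfl | rfl | rfl <;> rcases hf with rfl | rfl | rfl | rfl <;>
        first
          | decide
          | (exfalso
             rcases hv with hlt | ⟨heq, s, hs, hvv⟩
             · simp at hlt
             · rw [show runA[(0 : ℕ)]? = some (0 : GW.S) from rfl] at hs
               rw [(Option.some.inj hs).symm, GW_lab0] at hvv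
               have hb := C1_vis_bound hvv
               omega)

lemma linB : (GW.pathLabel runB).IsLin esB := by
  refine ⟨by decide, ?_, ?_⟩
  · ext e
    rw [List.mem_toFinset]
    exact memB_iff.symm
  · intro e f h
    rcases GW.pathLabel_vis_bound h with rfl | ⟨he, hf, hv⟩
    · exact le_refl _
    · rw [memB_iff] at he hf
      simp only [esB, List.mem_cons, List.not_mem_nil, or_false] at he hf
      rcases he with rfl | rfl | rfl | rfl | rfl | rfl | rfl | rfl <;>
        rcases hf with rfl | rfl | rfl | rfl | rfl | rfl | rfl | rfl <;>
        first
          | decide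
          | (exfalso
             rcases hv with hlt | ⟨heq, s, hs, hvv⟩
             · simp at hlt
             · first
               | exact absurd heq (by decide)
               | (rw [show runB[(0 : ℕ)]? = some (0 : GW.S) from rfl] at hs
                  rw [(Option.some.inj hs).symm, GW_lab0] at hvv
                  have hb := C1_vis_bound hvv
                  omega)
               | (rw [show runB[(2 : ℕ)]? = some (2 : GW.S) from rfl] at hs
                  rw [(Option.some.inj hs).symm, GW_lab2] at hvv
                  have hb := C1_vis_bound hvv
                  omega))

lemma actA : ∀ k : ℕ, k ∈ C1.E → (GW.pathLabel runA).act (0, k) = C1.act k := by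
  intro k hk
  have := GW.pathLabel_act_eq (σ := runA) (e := ((0 : ℕ), k)) (s := 0) rfl
    (by rw [GW_lab0]; exact hk)
  rw [this, GW_lab0]

lemma actB0 : ∀ k : ℕ, k ∈ C1.E → (GW.pathLabel runB).act (0, k) = C1.act k := by
  intro k hk
  have := GW.pathLabel_act_eq (σ := runB) (e := ((0 : ℕ), k)) (s := 0) rfl
    (by rw [GW_lab0]; exact hk)
  rw [this, GW_lab0]

lemma actB2 : ∀ k : ℕ, k ∈ C1.E → (GW.pathLabel runB).act (2, k) = C1.act k := by
  intro k hk
  have := GW.pathLabel_act_eq (σ := runB) (e := ((2 : ℕ), k)) (s := 2) rfl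
    (by rw [GW_lab2]; exact hk)
  rw [this, GW_lab2]

lemma mapA : wA = esA.map (GW.pathLabel runA).act := by
  show wA = List.map _ [(0,0), (0,1), (0,2), (0,3)]
  rw [List.map_cons, List.map_cons, List.map_cons, List.map_cons, List.map_nil,
    actA 0 (by decide), actA 1 (by decide), actA 2 (by decide), actA 3 (by decide)]
  rfl

lemma mapB : wB = esB.map (GW.pathLabel runB).act := by
  show wB = List.map _ [(0,0), (0,1), (0,2), (0,3), (2,0), (2,1), (2,2), (2,3)]
  rw [List.map_cons, List.map_cons, List.map_cons, List.map_cons, List.map_cons,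
    List.map_cons, List.map_cons, List.map_cons, List.map_nil,
    actB0 0 (by decide), actB0 1 (by decide), actB0 2 (by decide), actB0 3 (by decide),
    actB2 0 (by decide), actB2 1 (by decide), actB2 2 (by decide), actB2 3 (by decide)]
  rfl

lemma runA_run : GW.IsRun runA := by
  refine ⟨?_, rfl, rfl⟩
  rw [show runA = [(0 : GW.S), 1, 3] from rfl]
  unfold List.Chain'
  rw [List.isChain_cons_cons, List.isChain_cons_cons]
  exact ⟨Or.inl ⟨rfl, rfl⟩, Or.inr (Or.inr (Or.inl ⟨rfl, rfl⟩)), List.isChain_singleton _⟩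

lemma runB_run : GW.IsRun runB := by
  refine ⟨?_, rfl, rfl⟩
  rw [show runB = [(0 : GW.S), 1, 2, 3] from rfl]
  unfold List.Chain'
  rw [List.isChain_cons_cons, List.isChain_cons_cons, List.isChain_cons_cons]
  exact ⟨Or.inl ⟨rfl, rfl⟩, Or.inr (Or.inl ⟨rfl, rfl⟩),
    Or.inr (Or.inr (Or.inr ⟨rfl, rfl⟩)), List.isChain_singleton _⟩

lemma wA_mem : wA ∈ GW.lang := ⟨runA, runA_run, esA, linA, mapA⟩

lemma wB_mem : wB ∈ GW.lang := ⟨runB, runB_run, esB, linB, mapB⟩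

/-- From states 2 and 3 one can never come back to state 1. -/
lemma GW_stuck : ∀ (l : List GW.S) (z : GW.S), List.Chain' GW.edge (z :: l) →
    (z = 2 ∨ z = 3) → ∀ v, (z :: l).getLast? = some v → (v = 2 ∨ v = 3) := by
  intro l
  induction l with
  | nil =>
    intro z _ hz v hv
    simp only [List.getLast?_singleton, Option.some.injEq] at hv
    exact hv ▸ hz
  | cons y l ih =>
    intro z hch hz v hv
    unfold List.Chain' at hch
    rw [List.isChain_cons_cons] at hch
    have hy : y = 2 ∨ y = 3 := by
      rcases hz with rfl | rfl
      · rcases hch.1 with ⟨h, _⟩ | ⟨h, _⟩ | ⟨h, _⟩ | ⟨_, h⟩ <;> first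
          | exact absurd h (by decide)
          | exact Or.inr h
      · rcases hch.1 with ⟨h, _⟩ | ⟨h, _⟩ | ⟨h, _⟩ | ⟨h, _⟩ <;> exact absurd h (by decide)
    exact ih y hch.2 hy v (by rw [← hv, List.getLast?_cons_cons])

lemma GW_resolve {σ : List GW.S} (hh : σ.head? = some 0) :
    (GW.pathLabel σ).HasResolving (GW.triggers 1) := by
  obtain ⟨l, rfl⟩ : ∃ l, σ = 0 :: l := by
    cases σ with
    | nil => exact nomatch hh
    | cons z l =>
      rw [List.head?_cons] at hh
      exact ⟨l, by rw [Option.some.inj hh]⟩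
  have hs0 : ((0 : GW.S) :: l)[(0 : ℕ)]? = some (0 : GW.S) := by simp
  have hmem : ∀ k : ℕ, k ∈ C1.E → ((k : ℕ) ∈ (GW.lab 0).E) := by
    intro k hk; rw [GW_lab0]; exact hk
  refine ⟨(0, 0), (GW.mem_pathLabel_E).2 ⟨0, hs0, hmem 0 (by decide)⟩, ?_, ?_⟩
  · rw [(GW.pathLabel_fields (e := ((0 : ℕ), (0 : ℕ))) hs0 (hmem 0 (by decide))).1, GW_lab0]
    decide
  · intro p _
    cases p
    · refine ⟨(0, 2), (GW.mem_pathLabel_E).2 ⟨0, hs0, hmem 2 (by decide)⟩, ?_, ?_⟩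
      · rw [(GW.pathLabel_fields (e := ((0 : ℕ), (2 : ℕ))) hs0 (hmem 2 (by decide))).2.1, GW_lab0]
        decide
      · refine Relation.ReflTransGen.single (Or.inl ?_)
        rw [GW.pathLabel_msgRel_iff]
        refine ⟨0, hs0, hmem 0 (by decide), ?_, ?_⟩
        · rw [GW_lab0]; decide
        · rw [GW_lab0]; rfl
    · refine ⟨(0, 0), (GW.mem_pathLabel_E).2 ⟨0, hs0, hmem 0 (by decide)⟩, ?_, ?_⟩
      · rw [(GW.pathLabel_fields (e := ((0 : ℕ), (0 : ℕ))) hs0 (hmem 0 (by decide))).2.1, GW_lab0]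
        decide
      · exact Relation.ReflTransGen.refl

lemma GW_edge0 {y : GW.S} (h : GW.edge 0 y) : y = 1 := by
  rcases h with ⟨_, h⟩ | ⟨h, _⟩ | ⟨h, _⟩ | ⟨h, _⟩
  · exact h
  · exact absurd h (by decide)
  · exact absurd h (by decide)
  · exact absurd h (by decide)

lemma GW_edge2 {y : GW.S} (h : GW.edge 2 y) : y = 3 := by
  rcases h with ⟨h, _⟩ | ⟨h, _⟩ | ⟨h, _⟩ | ⟨_, h⟩
  · exact absurd h (by decide)
  · exact absurd h (by decide)
  · exact absurd h (by decide)
  · exact h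

lemma GW_edge3 {y : GW.S} (h : GW.edge 3 y) : False := by
  rcases h with ⟨h, _⟩ | ⟨h, _⟩ | ⟨h, _⟩ | ⟨h, _⟩ <;> exact absurd h (by decide)

lemma GW_controllable : GW.ControllableChoice := by
  intro u hu
  obtain ⟨v, x, h1, h2, hne⟩ := hu
  have hu1 : u = 1 := by
    fin_cases u
    · exact absurd ((GW_edge0 h1).trans (GW_edge0 h2).symm) hne
    · rfl
    · exact absurd ((GW_edge2 h1).trans (GW_edge2 h2).symm) hne
    · exact absurd h1 GW_edge3
  subst hu1
  right
  refine ⟨⟨v, x, h1, h2, hne⟩, ?_, ?_⟩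
  · intro σ hch hh hl
    exact GW_resolve hh
  · intro s1 σ' he hch hl
    exfalso
    have hs1 : s1 = 2 ∨ s1 = 3 := by
      rcases he with ⟨h, _⟩ | ⟨_, h⟩ | ⟨_, h⟩ | ⟨h, _⟩
      · exact absurd h (by decide)
      · exact Or.inl h
      · exact Or.inr h
      · exact absurd h (by decide)
    rcases GW_stuck σ' s1 hch hs1 1 hl with h | h <;> exact absurd h (by decide)

lemma list_len4 {α : Type} {l : List α} (h : l.length = 4) :
    ∃ a b c d, l = [a, b, c, d] := by
  rcases l with _ | ⟨a, _ | ⟨b, _ | ⟨c, _ | ⟨d, _ | ⟨x, t⟩⟩⟩⟩⟩ <;>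
    simp only [List.length_cons, List.length_nil] at h <;>
    first
      | omega
      | exact ⟨a, b, c, d, rfl⟩

lemma list_len8 {α : Type} {l : List α} (h : l.length = 8) :
    ∃ a b c d e f g i, l = [a, b, c, d, e, f, g, i] := by
  rcases l with _ | ⟨a, _ | ⟨b, _ | ⟨c, _ | ⟨d, _ | ⟨e, _ | ⟨f, _ | ⟨g, _ | ⟨i, _ | ⟨x, t⟩⟩⟩⟩⟩⟩⟩⟩⟩ <;>
    simp only [List.length_cons, List.length_nil] at h <;>
    first
      | omega
      | exact ⟨a, b, c, d, e, f, g, i, rfl⟩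

lemma exists_diverge {α : Type} : ∀ (l1 l2 : List α), ¬ l1 <+: l2 → ¬ l2 <+: l1 →
    ∃ d a b t1 t2, a ≠ b ∧ l1 = d ++ a :: t1 ∧ l2 = d ++ b :: t2 := by
  intro l1
  induction l1 with
  | nil =>
    intro l2 h1 _
    exact absurd List.nil_prefix h1
  | cons x l1 ih =>
    intro l2 h1 h2
    cases l2 with
    | nil => exact absurd List.nil_prefix h2
    | cons y l2 =>
      by_cases hxy : x = y
      · subst hxy
        obtain ⟨d, a, b, t1, t2, hab, hd1, hd2⟩ :=
          ih l2 (fun h => h1 (List.cons_prefix_cons.2 ⟨rfl, h⟩))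
            (fun h => h2 (List.cons_prefix_cons.2 ⟨rfl, h⟩))
        exact ⟨x :: d, a, b, t1, t2, hab, by rw [List.cons_append, hd1],
          by rw [List.cons_append, hd2]⟩
      · exact ⟨[], x, y, l1, l2, hxy, rfl, rfl⟩

namespace MSG

open PreBMSC

variable (G' : MSG ℕ Bool Bool)

lemma run_not_prefix {a b : List G'.S} (ha : G'.IsRun a) (hb : G'.IsRun b)
    (hne : a ≠ b) : ¬ a <+: b := by
  rintro ⟨r, rfl⟩
  cases r with
  | nil => simp at hne
  | cons c r =>
    have hch := hb.1
    unfold List.Chain' at hch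
    rw [List.isChain_append] at hch
    exact G'.sf_no_outgoing c
      (hch.2.2 G'.sf (Option.mem_def.2 ha.2.2) c (Option.mem_def.2 rfl))

lemma suffix_initiates (δ τ : List G'.S) (m : ℕ × ℕ)
    (hmem : shiftE δ.length m ∈ (G'.pathLabel (δ ++ τ)).E)
    (hmsg : ∀ g, ¬ (G'.pathLabel (δ ++ τ)).msgRel g (shiftE δ.length m))
    (hpl : ∀ g, (G'.pathLabel (δ ++ τ)).procLt g (shiftE δ.length m) →
      δ.length ≤ g.1 → False) :
    (G'.pathLabel τ).initiates
      ((G'.pathLabel (δ ++ τ)).proc (shiftE δ.length m)) := by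
  have hmemτ : m ∈ (G'.pathLabel τ).E := (G'.transport_mem).2 hmem
  obtain ⟨s, hs, hm2⟩ := (G'.mem_pathLabel_E).1 hmemτ
  refine ⟨m, hmemτ, G'.transport_proc hs hm2, ?_⟩
  refine G'.min_of_no_step ?_
  intro c hc
  rcases hc with hc | hc
  · exact hmsg _ (G'.transport_msgRel hc)
  · exact hpl _ (G'.transport_procLt hc) (Nat.le_add_right _ _)

lemma msg_into_send {σ : List G'.S} {x px g : ℕ × ℕ}
    (hpx : (G'.pathLabel σ).partner x = px)
    (hpxs : (G'.pathLabel σ).isSend px = false)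
    (hg : (G'.pathLabel σ).msgRel g x) : False := by
  obtain ⟨hgE, hgs, hx⟩ := hg
  obtain ⟨s, hs, he⟩ := (G'.mem_pathLabel_E).1 hgE
  have hinv : (G'.pathLabel σ).partner x = g := by
    rw [hx]
    exact G'.pathLabel_partner_invol hs he
  rw [hpx] at hinv
  rw [hinv, hgs] at hpxs
  exact Bool.noConfusion hpxs

end MSG

end MSC

namespace MSC

open PreBMSC

theorem GW_not_local (G' : MSG ℕ Bool Bool) (hloc : G'.LocalChoice)
    (heq : GW.lang = G'.lang) : False := by
  have hwA : wA ∈ G'.lang := heq ▸ wA_mem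
  have hwB : wB ∈ G'.lang := heq ▸ wB_mem
  obtain ⟨ρ1, hr1, es1, hlin1, hm1⟩ := hwA
  obtain ⟨ρ2, hr2, es2, hlin2, hm2⟩ := hwB
  have hlen1 : es1.length = 4 := by
    have h := congrArg List.length hm1
    rw [List.length_map, show wA.length = 4 from rfl] at h
    exact h.symm
  have hlen2 : es2.length = 8 := by
    have h := congrArg List.length hm2
    rw [List.length_map, show wB.length = 8 from rfl] at h
    exact h.symm
  -- the two runs are distinct
  have hne : ρ1 ≠ ρ2 := by
    rintro rfl
    have h := hlin1.2.1.trans hlin2.2.1.symm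
    have h' := congrArg Finset.card h
    rw [List.toFinset_card_of_nodup hlin1.1, List.toFinset_card_of_nodup hlin2.1,
      hlen1, hlen2] at h'
    omega
  obtain ⟨d, a, b, t1, t2, hab, he1, he2⟩ :=
    exists_diverge ρ1 ρ2 (G'.run_not_prefix hr1 hr2 hne)
      (G'.run_not_prefix hr2 hr1 (Ne.symm hne))
  subst he1; subst he2
  have hd : d ≠ [] := by
    rintro rfl
    have g1 := hr1.2.1
    have g2 := hr2.2.1
    rw [List.nil_append, List.head?_cons] at g1 g2
    exact hab ((Option.some.inj g1).trans (Option.some.inj g2).symm)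
  have hch1 := hr1.1
  unfold List.Chain' at hch1
  rw [List.isChain_append] at hch1
  obtain ⟨hcd, hct1, hx1⟩ := hch1
  have hch2 := hr2.1
  unfold List.Chain' at hch2
  rw [List.isChain_append] at hch2
  obtain ⟨-, hct2, hx2⟩ := hch2
  have hul : d.getLast? = some (d.getLast hd) := List.getLast?_eq_getLast (l := d) hd
  set u := d.getLast hd with hu
  have hua : G'.edge u a := hx1 u (Option.mem_def.2 hul) a (Option.mem_def.2 rfl)
  have hub : G'.edge u b := hx2 u (Option.mem_def.2 hul) b (Option.mem_def.2 rfl)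
  obtain ⟨-, r, htr⟩ := hloc u ⟨a, b, hua, hub, hab⟩
  set dl := d.length with hdl
  -- destructure the linearizations
  obtain ⟨e0, e1, e2, e3, rfl⟩ := list_len4 hlen1
  obtain ⟨f0, f1, f2, f3, f4, f5, f6, f7, rfl⟩ := list_len8 hlen2
  simp only [wA, List.map_cons, List.map_nil, List.cons.injEq, and_true] at hm1
  obtain ⟨ha0, ha1, ha2, ha3⟩ := hm1
  simp only [wB, wA, List.cons_append, List.nil_append, List.map_cons, List.map_nil,
    List.cons.injEq, and_true] at hm2
  obtain ⟨hb0, hb1, hb2, hb3, hb4, hb5, hb6, hb7⟩ := hm2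
  -- tables for the first run
  have h0s := PreBMSC.act_eq_send ha0.symm
  have h1s := PreBMSC.act_eq_send ha1.symm
  have h2s := PreBMSC.act_eq_recv ha2.symm
  have h3s := PreBMSC.act_eq_recv ha3.symm
  have hEiff1 : ∀ e, e ∈ (G'.pathLabel (d ++ a :: t1)).E ↔
      (e = e0 ∨ e = e1 ∨ e = e2 ∨ e = e3) := by
    intro e
    rw [← hlin1.2.1, List.mem_toFinset]
    simp
  have me0 : e0 ∈ (G'.pathLabel (d ++ a :: t1)).E := (hEiff1 e0).2 (by simp)
  have me1 : e1 ∈ (G'.pathLabel (d ++ a :: t1)).E := (hEiff1 e1).2 (by simp)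
  have me2 : e2 ∈ (G'.pathLabel (d ++ a :: t1)).E := (hEiff1 e2).2 (by simp)
  have me3 : e3 ∈ (G'.pathLabel (d ++ a :: t1)).E := (hEiff1 e3).2 (by simp)
  have hnd1 := hlin1.1
  simp only [List.nodup_cons, List.mem_cons, List.not_mem_nil, or_false, not_or,
    List.nodup_nil, and_true] at hnd1
  obtain ⟨⟨hne01, hne02, hne03⟩, ⟨hne12, hne13⟩, hne23⟩ := hnd1
  have hq12 : (G'.pathLabel (d ++ a :: t1)).procLt e1 e2 := by
    rcases G'.pathLabel_procLt_total me1 me2 (by rw [h1s.2, h2s.2]) hne12 with h | h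
    · exact h
    · have := G'.lin_idx_le hlin1 (i := 2) (j := 1) (by simp) (by simp)
        (Relation.ReflTransGen.single (Or.inr h))
      omega
  have hp03 : (G'.pathLabel (d ++ a :: t1)).procLt e0 e3 := by
    rcases G'.pathLabel_procLt_total me0 me3 (by rw [h0s.2, h3s.2]) hne03 with h | h
    · exact h
    · have := G'.lin_idx_le hlin1 (i := 3) (j := 0) (by simp) (by simp)
        (Relation.ReflTransGen.single (Or.inr h))
      omega
  have hpart0 : (G'.pathLabel (d ++ a :: t1)).partner e0 = e2 ∧ e2.1 = e0.1 := by
    obtain ⟨pm, pk, pp, plvl⟩ := G'.partner_props me0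
    rcases (hEiff1 _).1 pm with h | h | h | h
    · rw [h, h0s.1] at pk
      exact absurd pk (by decide)
    · rw [h, h1s.1, h0s.1] at pk
      exact absurd pk (by decide)
    · refine ⟨h, ?_⟩
      rw [h] at plvl
      exact plvl
    · rw [h, h3s.2, h0s.2] at pp
      exact absurd rfl pp
  have hpart1 : (G'.pathLabel (d ++ a :: t1)).partner e1 = e3 ∧ e3.1 = e1.1 := by
    obtain ⟨pm, pk, pp, plvl⟩ := G'.partner_props me1
    rcases (hEiff1 _).1 pm with h | h | h | h
    · rw [h, h0s.1, h1s.1] at pk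
      exact absurd pk (by decide)
    · rw [h, h1s.1] at pk
      exact absurd pk (by decide)
    · rw [h, h2s.2, h1s.2] at pp
      exact absurd rfl pp
    · refine ⟨h, ?_⟩
      rw [h] at plvl
      exact plvl
  -- tables for the second run
  have g0s := PreBMSC.act_eq_send hb0.symm
  have g1s := PreBMSC.act_eq_send hb1.symm
  have g2s := PreBMSC.act_eq_recv hb2.symm
  have g3s := PreBMSC.act_eq_recv hb3.symm
  have g4s := PreBMSC.act_eq_send hb4.symm
  have g5s := PreBMSC.act_eq_send hb5.symm
  have g6s := PreBMSC.act_eq_recv hb6.symm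
  have g7s := PreBMSC.act_eq_recv hb7.symm
  have hEiff2 : ∀ e, e ∈ (G'.pathLabel (d ++ b :: t2)).E ↔
      (e = f0 ∨ e = f1 ∨ e = f2 ∨ e = f3 ∨ e = f4 ∨ e = f5 ∨ e = f6 ∨ e = f7) := by
    intro e
    rw [← hlin2.2.1, List.mem_toFinset]
    simp
  have mf0 : f0 ∈ (G'.pathLabel (d ++ b :: t2)).E := (hEiff2 f0).2 (by simp)
  have mf1 : f1 ∈ (G'.pathLabel (d ++ b :: t2)).E := (hEiff2 f1).2 (by simp)
  have mf2 : f2 ∈ (G'.pathLabel (d ++ b :: t2)).E := (hEiff2 f2).2 (by simp)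
  have mf3 : f3 ∈ (G'.pathLabel (d ++ b :: t2)).E := (hEiff2 f3).2 (by simp)
  have mf4 : f4 ∈ (G'.pathLabel (d ++ b :: t2)).E := (hEiff2 f4).2 (by simp)
  have mf5 : f5 ∈ (G'.pathLabel (d ++ b :: t2)).E := (hEiff2 f5).2 (by simp)
  have mf6 : f6 ∈ (G'.pathLabel (d ++ b :: t2)).E := (hEiff2 f6).2 (by simp)
  have mf7 : f7 ∈ (G'.pathLabel (d ++ b :: t2)).E := (hEiff2 f7).2 (by simp)
  have hne2 : ∀ (i j : ℕ) (hi : i < ([f0,f1,f2,f3,f4,f5,f6,f7] : List (ℕ × ℕ)).length)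
      (hj : j < ([f0,f1,f2,f3,f4,f5,f6,f7] : List (ℕ × ℕ)).length), i ≠ j →
      [f0,f1,f2,f3,f4,f5,f6,f7][i]'hi ≠ [f0,f1,f2,f3,f4,f5,f6,f7][j]'hj :=
    fun i j hi hj hij h => hij (hlin2.1.getElem_inj_iff.1 h)
  have k04 : f0 ≠ f4 := hne2 0 4 (by simp) (by simp) (by omega)
  have k15 : f1 ≠ f5 := hne2 1 5 (by simp) (by simp) (by omega)
  have k26 : f2 ≠ f6 := hne2 2 6 (by simp) (by simp) (by omega)
  have k37 : f3 ≠ f7 := hne2 3 7 (by simp) (by simp) (by omega)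
  have h04 : (G'.pathLabel (d ++ b :: t2)).procLt f0 f4 := by
    rcases G'.pathLabel_procLt_total mf0 mf4 (by rw [g0s.2, g4s.2]) k04 with h | h
    · exact h
    · have := G'.lin_idx_le hlin2 (i := 4) (j := 0) (by simp) (by simp)
        (Relation.ReflTransGen.single (Or.inr h))
      omega
  have h15 : (G'.pathLabel (d ++ b :: t2)).procLt f1 f5 := by
    rcases G'.pathLabel_procLt_total mf1 mf5 (by rw [g1s.2, g5s.2]) k15 with h | h
    · exact h
    · have := G'.lin_idx_le hlin2 (i := 5) (j := 1) (by simp) (by simp)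
        (Relation.ReflTransGen.single (Or.inr h))
      omega
  have h26 : (G'.pathLabel (d ++ b :: t2)).procLt f2 f6 := by
    rcases G'.pathLabel_procLt_total mf2 mf6 (by rw [g2s.2, g6s.2]) k26 with h | h
    · exact h
    · have := G'.lin_idx_le hlin2 (i := 6) (j := 2) (by simp) (by simp)
        (Relation.ReflTransGen.single (Or.inr h))
      omega
  have h37 : (G'.pathLabel (d ++ b :: t2)).procLt f3 f7 := by
    rcases G'.pathLabel_procLt_total mf3 mf7 (by rw [g3s.2, g7s.2]) k37 with h | h
    · exact h
    · have := G'.lin_idx_le hlin2 (i := 7) (j := 3) (by simp) (by simp)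
        (Relation.ReflTransGen.single (Or.inr h))
      omega
  -- common prefix transfer
  have hlow_iff : ∀ e : ℕ × ℕ, e.1 < dl →
      (e ∈ (G'.pathLabel (d ++ a :: t1)).E ↔ e ∈ (G'.pathLabel (d ++ b :: t2)).E) := by
    intro e he
    rw [G'.mem_pathLabel_E, G'.mem_pathLabel_E,
      G'.getElem?_low (τ := a :: t1) he, G'.getElem?_low (τ := b :: t2) he]
  have hlow_act : ∀ e : ℕ × ℕ, e.1 < dl → e ∈ (G'.pathLabel (d ++ a :: t1)).E →
      (G'.pathLabel (d ++ a :: t1)).act e = (G'.pathLabel (d ++ b :: t2)).act e := by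
    intro e he hm
    obtain ⟨s, hs, hmm⟩ := (G'.mem_pathLabel_E).1 hm
    have hs0 : d[e.1]? = some s := by
      rw [← G'.getElem?_low (τ := a :: t1) he]
      exact hs
    rw [G'.pathLabel_act_eq hs hmm,
      G'.pathLabel_act_eq (σ := d ++ b :: t2) (by rw [G'.getElem?_low (τ := b :: t2) he]; exact hs0) hmm]
  by_cases hD : ∀ e ∈ (G'.pathLabel (d ++ a :: t1)).E, dl ≤ e.1
  · -- Case A: the common prefix carries no event of the first run.
    have hφ0 : MSG.shiftE dl (e0.1 - dl, e0.2) = e0 := by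
      have h := hD e0 me0
      unfold MSG.shiftE
      exact Prod.ext (show dl + (e0.1 - dl) = e0.1 by omega) rfl
    have hφ1 : MSG.shiftE dl (e1.1 - dl, e1.2) = e1 := by
      have h := hD e1 me1
      unfold MSG.shiftE
      exact Prod.ext (show dl + (e1.1 - dl) = e1.1 by omega) rfl
    have hresT : (G'.pathLabel (a :: t1)).initiates true := by
      have hres := G'.suffix_initiates d (a :: t1) (e0.1 - dl, e0.2)
        (by rw [hφ0]; exact me0)
        (by
          intro g hg
          rw [hφ0] at hg
          exact G'.msg_into_send hpart0.1 h2s.1 hg)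
        (by
          intro g hg hlev
          rw [hφ0] at hg
          have hproc := G'.pathLabel_procLt_proc hg
          have hgE := (G'.pstep_mem (Or.inr hg)).1
          rcases (hEiff1 _).1 hgE with rfl | rfl | rfl | rfl
          · exact G'.pathLabel_procLt_irrefl hg
          · rw [h1s.2, h0s.2] at hproc
            exact Bool.noConfusion hproc
          · rw [h2s.2, h0s.2] at hproc
            exact Bool.noConfusion hproc
          · have := G'.lin_idx_le hlin1 (i := 3) (j := 0) (by simp) (by simp)
              (Relation.ReflTransGen.single (Or.inr hg))
            omega)
      rw [hφ0, h0s.2] at hres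
      exact hres
    have hresF : (G'.pathLabel (a :: t1)).initiates false := by
      have hres := G'.suffix_initiates d (a :: t1) (e1.1 - dl, e1.2)
        (by rw [hφ1]; exact me1)
        (by
          intro g hg
          rw [hφ1] at hg
          exact G'.msg_into_send hpart1.1 h3s.1 hg)
        (by
          intro g hg hlev
          rw [hφ1] at hg
          have hproc := G'.pathLabel_procLt_proc hg
          have hgE := (G'.pstep_mem (Or.inr hg)).1
          rcases (hEiff1 _).1 hgE with rfl | rfl | rfl | rfl
          · rw [h0s.2, h1s.2] at hproc
            exact Bool.noConfusion hproc
          · exact G'.pathLabel_procLt_irrefl hg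
          · have := G'.lin_idx_le hlin1 (i := 2) (j := 1) (by simp) (by simp)
              (Relation.ReflTransGen.single (Or.inr hg))
            omega
          · rw [h3s.2, h1s.2] at hproc
            exact Bool.noConfusion hproc)
      rw [hφ1, h1s.2] at hres
      exact hres
    have hmemT : (true : Bool) ∈ G'.triggers u := ⟨a, t1, hua, hct1, hresT⟩
    have hmemF : (false : Bool) ∈ G'.triggers u := ⟨a, t1, hua, hct1, hresF⟩
    rw [htr, Set.mem_singleton_iff] at hmemT hmemF
    rw [← hmemT] at hmemF
    exact Bool.noConfusion hmemF
  · -- Case B: all events of the first run lie in the common prefix.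
    push_neg at hD
    obtain ⟨ee, heeE, heelow⟩ := hD
    have hlev20 : e2.1 = e0.1 := hpart0.2
    have hlev31 : e3.1 = e1.1 := hpart1.2
    have hle12 : e1.1 ≤ e2.1 := G'.pathLabel_procLt_level hq12
    have hle03 : e0.1 ≤ e3.1 := G'.pathLabel_procLt_level hp03
    have low4 : e0.1 < dl ∧ e1.1 < dl ∧ e2.1 < dl ∧ e3.1 < dl := by
      rcases (hEiff1 _).1 heeE with rfl | rfl | rfl | rfl <;> omega
    have hlowN2 : ∀ e : ℕ × ℕ, e.1 < dl → e ∈ (G'.pathLabel (d ++ b :: t2)).E →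
        (G'.pathLabel (d ++ a :: t1)).act e = (G'.pathLabel (d ++ b :: t2)).act e ∧
        e ∈ (G'.pathLabel (d ++ a :: t1)).E := by
      intro e hl hm
      have h1 : e ∈ (G'.pathLabel (d ++ a :: t1)).E := (hlow_iff e hl).2 hm
      exact ⟨hlow_act e hl h1, h1⟩
    have hf4 : dl ≤ f4.1 := by
      by_contra hlow
      push_neg at hlow
      obtain ⟨hacteq, hmem1⟩ := hlowN2 f4 hlow mf4
      have hact4 : (G'.pathLabel (d ++ a :: t1)).act f4 = Action.send true false true := by
        rw [hacteq, ← hb4]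
      have hf4e0 : f4 = e0 := by
        rcases (hEiff1 _).1 hmem1 with rfl | rfl | rfl | rfl
        · rfl
        · rw [← ha1] at hact4; simp at hact4
        · rw [← ha2] at hact4; simp at hact4
        · rw [← ha3] at hact4; simp at hact4
      have hl0 : f0.1 < dl := by
        have := G'.pathLabel_procLt_level h04
        omega
      obtain ⟨hacteq0, hmem0⟩ := hlowN2 f0 hl0 mf0
      have hact0 : (G'.pathLabel (d ++ a :: t1)).act f0 = Action.send true false true := by
        rw [hacteq0, ← hb0]
      have hf0e0 : f0 = e0 := by
        rcases (hEiff1 _).1 hmem0 with rfl | rfl | rfl | rfl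
        · rfl
        · rw [← ha1] at hact0; simp at hact0
        · rw [← ha2] at hact0; simp at hact0
        · rw [← ha3] at hact0; simp at hact0
      exact k04 (hf0e0.trans hf4e0.symm)
    have hf5 : dl ≤ f5.1 := by
      by_contra hlow
      push_neg at hlow
      obtain ⟨hacteq, hmem1⟩ := hlowN2 f5 hlow mf5
      have hact5 : (G'.pathLabel (d ++ a :: t1)).act f5 = Action.send false true true := by
        rw [hacteq, ← hb5]
      have hf5e1 : f5 = e1 := by
        rcases (hEiff1 _).1 hmem1 with rfl | rfl | rfl | rfl
        · rw [← ha0] at hact5; simp at hact5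
        · rfl
        · rw [← ha2] at hact5; simp at hact5
        · rw [← ha3] at hact5; simp at hact5
      have hl1 : f1.1 < dl := by
        have := G'.pathLabel_procLt_level h15
        omega
      obtain ⟨hacteq1, hmem1'⟩ := hlowN2 f1 hl1 mf1
      have hact1 : (G'.pathLabel (d ++ a :: t1)).act f1 = Action.send false true true := by
        rw [hacteq1, ← hb1]
      have hf1e1 : f1 = e1 := by
        rcases (hEiff1 _).1 hmem1' with rfl | rfl | rfl | rfl
        · rw [← ha0] at hact1; simp at hact1
        · rfl
        · rw [← ha2] at hact1; simp at hact1
        · rw [← ha3] at hact1; simp at hact1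
      exact k15 (hf1e1.trans hf5e1.symm)
    have hf6 : dl ≤ f6.1 := by
      by_contra hlow
      push_neg at hlow
      obtain ⟨hacteq, hmem1⟩ := hlowN2 f6 hlow mf6
      have hact6 : (G'.pathLabel (d ++ a :: t1)).act f6 = Action.recv false true true := by
        rw [hacteq, ← hb6]
      have hf6e2 : f6 = e2 := by
        rcases (hEiff1 _).1 hmem1 with rfl | rfl | rfl | rfl
        · rw [← ha0] at hact6; simp at hact6
        · rw [← ha1] at hact6; simp at hact6
        · rfl
        · rw [← ha3] at hact6; simp at hact6
      have hl2 : f2.1 < dl := by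
        have := G'.pathLabel_procLt_level h26
        omega
      obtain ⟨hacteq2, hmem2'⟩ := hlowN2 f2 hl2 mf2
      have hact2 : (G'.pathLabel (d ++ a :: t1)).act f2 = Action.recv false true true := by
        rw [hacteq2, ← hb2]
      have hf2e2 : f2 = e2 := by
        rcases (hEiff1 _).1 hmem2' with rfl | rfl | rfl | rfl
        · rw [← ha0] at hact2; simp at hact2
        · rw [← ha1] at hact2; simp at hact2
        · rfl
        · rw [← ha3] at hact2; simp at hact2
      exact k26 (hf2e2.trans hf6e2.symm)
    have hf7 : dl ≤ f7.1 := by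
      by_contra hlow
      push_neg at hlow
      obtain ⟨hacteq, hmem1⟩ := hlowN2 f7 hlow mf7
      have hact7 : (G'.pathLabel (d ++ a :: t1)).act f7 = Action.recv true false true := by
        rw [hacteq, ← hb7]
      have hf7e3 : f7 = e3 := by
        rcases (hEiff1 _).1 hmem1 with rfl | rfl | rfl | rfl
        · rw [← ha0] at hact7; simp at hact7
        · rw [← ha1] at hact7; simp at hact7
        · rw [← ha2] at hact7; simp at hact7
        · rfl
      have hl3 : f3.1 < dl := by
        have := G'.pathLabel_procLt_level h37
        omega
      obtain ⟨hacteq3, hmem3'⟩ := hlowN2 f3 hl3 mf3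
      have hact3 : (G'.pathLabel (d ++ a :: t1)).act f3 = Action.recv true false true := by
        rw [hacteq3, ← hb3]
      have hf3e3 : f3 = e3 := by
        rcases (hEiff1 _).1 hmem3' with rfl | rfl | rfl | rfl
        · rw [← ha0] at hact3; simp at hact3
        · rw [← ha1] at hact3; simp at hact3
        · rw [← ha2] at hact3; simp at hact3
        · rfl
      exact k37 (hf3e3.trans hf7e3.symm)
    -- the low halves of the two runs coincide
    have hid0 : e0 = f0 := by
      have hm2' : e0 ∈ (G'.pathLabel (d ++ b :: t2)).E := (hlow_iff e0 low4.1).1 me0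
      have hact : (G'.pathLabel (d ++ b :: t2)).act e0 = Action.send true false true := by
        rw [← hlow_act e0 low4.1 me0, ← ha0]
      rcases (hEiff2 _).1 hm2' with rfl | rfl | rfl | rfl | rfl | rfl | rfl | rfl
      · rfl
      · rw [← hb1] at hact; simp at hact
      · rw [← hb2] at hact; simp at hact
      · rw [← hb3] at hact; simp at hact
      · exfalso; omega
      · rw [← hb5] at hact; simp at hact
      · rw [← hb6] at hact; simp at hact
      · rw [← hb7] at hact; simp at hact
    have hid1 : e1 = f1 := by
      have hm2' : e1 ∈ (G'.pathLabel (d ++ b :: t2)).E := (hlow_iff e1 low4.2.1).1 me1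
      have hact : (G'.pathLabel (d ++ b :: t2)).act e1 = Action.send false true true := by
        rw [← hlow_act e1 low4.2.1 me1, ← ha1]
      rcases (hEiff2 _).1 hm2' with rfl | rfl | rfl | rfl | rfl | rfl | rfl | rfl
      · rw [← hb0] at hact; simp at hact
      · rfl
      · rw [← hb2] at hact; simp at hact
      · rw [← hb3] at hact; simp at hact
      · rw [← hb4] at hact; simp at hact
      · exfalso; omega
      · rw [← hb6] at hact; simp at hact
      · rw [← hb7] at hact; simp at hact
    have hid2 : e2 = f2 := by
      have hm2' : e2 ∈ (G'.pathLabel (d ++ b :: t2)).E := (hlow_iff e2 low4.2.2.1).1 me2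
      have hact : (G'.pathLabel (d ++ b :: t2)).act e2 = Action.recv false true true := by
        rw [← hlow_act e2 low4.2.2.1 me2, ← ha2]
      rcases (hEiff2 _).1 hm2' with rfl | rfl | rfl | rfl | rfl | rfl | rfl | rfl
      · rw [← hb0] at hact; simp at hact
      · rw [← hb1] at hact; simp at hact
      · rfl
      · rw [← hb3] at hact; simp at hact
      · rw [← hb4] at hact; simp at hact
      · rw [← hb5] at hact; simp at hact
      · exfalso; omega
      · rw [← hb7] at hact; simp at hact
    have hid3 : e3 = f3 := by
      have hm2' : e3 ∈ (G'.pathLabel (d ++ b :: t2)).E := (hlow_iff e3 low4.2.2.2).1 me3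
      have hact : (G'.pathLabel (d ++ b :: t2)).act e3 = Action.recv true false true := by
        rw [← hlow_act e3 low4.2.2.2 me3, ← ha3]
      rcases (hEiff2 _).1 hm2' with rfl | rfl | rfl | rfl | rfl | rfl | rfl | rfl
      · rw [← hb0] at hact; simp at hact
      · rw [← hb1] at hact; simp at hact
      · rw [← hb2] at hact; simp at hact
      · rfl
      · rw [← hb4] at hact; simp at hact
      · rw [← hb5] at hact; simp at hact
      · rw [← hb6] at hact; simp at hact
      · exfalso; omega
    have hf0low : f0.1 < dl := by rw [← hid0]; exact low4.1
    have hf1low : f1.1 < dl := by rw [← hid1]; exact low4.2.1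
    have hf2low : f2.1 < dl := by rw [← hid2]; exact low4.2.2.1
    have hf3low : f3.1 < dl := by rw [← hid3]; exact low4.2.2.2
    -- partners of the second-copy sends
    have hpf4 : (G'.pathLabel (d ++ b :: t2)).partner f4 = f6 := by
      obtain ⟨pm, pk, pp, plvl⟩ := G'.partner_props mf4
      rcases (hEiff2 _).1 pm with h | h | h | h | h | h | h | h
      · rw [h, g0s.1, g4s.1] at pk; exact absurd pk (by decide)
      · rw [h, g1s.1, g4s.1] at pk; exact absurd pk (by decide)
      · exfalso
        rw [h] at plvl
        omega
      · rw [h, g3s.2, g4s.2] at pp; exact absurd rfl pp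
      · rw [h, g4s.1] at pk; exact absurd pk (by decide)
      · rw [h, g5s.1, g4s.1] at pk; exact absurd pk (by decide)
      · exact h
      · rw [h, g7s.2, g4s.2] at pp; exact absurd rfl pp
    have hpf5 : (G'.pathLabel (d ++ b :: t2)).partner f5 = f7 := by
      obtain ⟨pm, pk, pp, plvl⟩ := G'.partner_props mf5
      rcases (hEiff2 _).1 pm with h | h | h | h | h | h | h | h
      · rw [h, g0s.1, g5s.1] at pk; exact absurd pk (by decide)
      · rw [h, g1s.1, g5s.1] at pk; exact absurd pk (by decide)
      · rw [h, g2s.2, g5s.2] at pp; exact absurd rfl pp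
      · exfalso
        rw [h] at plvl
        omega
      · rw [h, g4s.1, g5s.1] at pk; exact absurd pk (by decide)
      · rw [h, g5s.1] at pk; exact absurd pk (by decide)
      · rw [h, g6s.2, g5s.2] at pp; exact absurd rfl pp
      · exact h
    -- both processes initiate the suffix of the second run
    have hphi4 : MSG.shiftE dl (f4.1 - dl, f4.2) = f4 := by
      unfold MSG.shiftE
      exact Prod.ext (show dl + (f4.1 - dl) = f4.1 by omega) rfl
    have hphi5 : MSG.shiftE dl (f5.1 - dl, f5.2) = f5 := by
      unfold MSG.shiftE
      exact Prod.ext (show dl + (f5.1 - dl) = f5.1 by omega) rfl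
    have hresT : (G'.pathLabel (b :: t2)).initiates true := by
      have hres := G'.suffix_initiates d (b :: t2) (f4.1 - dl, f4.2)
        (by rw [hphi4]; exact mf4)
        (by
          intro g hg
          rw [hphi4] at hg
          exact G'.msg_into_send hpf4 g6s.1 hg)
        (by
          intro g hg hlev
          rw [hphi4] at hg
          have hproc := G'.pathLabel_procLt_proc hg
          have hgE := (G'.pstep_mem (Or.inr hg)).1
          rcases (hEiff2 _).1 hgE with rfl | rfl | rfl | rfl | rfl | rfl | rfl | rfl
          · omega
          · rw [g1s.2, g4s.2] at hproc
            exact Bool.noConfusion hproc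
          · rw [g2s.2, g4s.2] at hproc
            exact Bool.noConfusion hproc
          · omega
          · exact G'.pathLabel_procLt_irrefl hg
          · rw [g5s.2, g4s.2] at hproc
            exact Bool.noConfusion hproc
          · rw [g6s.2, g4s.2] at hproc
            exact Bool.noConfusion hproc
          · have := G'.lin_idx_le hlin2 (i := 7) (j := 4) (by simp) (by simp)
              (Relation.ReflTransGen.single (Or.inr hg))
            omega)
      rw [hphi4, g4s.2] at hres
      exact hres
    have hresF : (G'.pathLabel (b :: t2)).initiates false := by
      have hres := G'.suffix_initiates d (b :: t2) (f5.1 - dl, f5.2)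
        (by rw [hphi5]; exact mf5)
        (by
          intro g hg
          rw [hphi5] at hg
          exact G'.msg_into_send hpf5 g7s.1 hg)
        (by
          intro g hg hlev
          rw [hphi5] at hg
          have hproc := G'.pathLabel_procLt_proc hg
          have hgE := (G'.pstep_mem (Or.inr hg)).1
          rcases (hEiff2 _).1 hgE with rfl | rfl | rfl | rfl | rfl | rfl | rfl | rfl
          · rw [g0s.2, g5s.2] at hproc
            exact Bool.noConfusion hproc
          · omega
          · omega
          · rw [g3s.2, g5s.2] at hproc
            exact Bool.noConfusion hproc
          · rw [g4s.2, g5s.2] at hproc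
            exact Bool.noConfusion hproc
          · exact G'.pathLabel_procLt_irrefl hg
          · have := G'.lin_idx_le hlin2 (i := 6) (j := 5) (by simp) (by simp)
              (Relation.ReflTransGen.single (Or.inr hg))
            omega
          · rw [g7s.2, g5s.2] at hproc
            exact Bool.noConfusion hproc)
      rw [hphi5, g5s.2] at hres
      exact hres
    have hmemT : (true : Bool) ∈ G'.triggers u := ⟨b, t2, hub, hct2, hresT⟩
    have hmemF : (false : Bool) ∈ G'.triggers u := ⟨b, t2, hub, hct2, hresF⟩
    rw [htr, Set.mem_singleton_iff] at hmemT hmemF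
    rw [← hmemT] at hmemF
    exact Bool.noConfusion hmemF

end MSC

open MSC in
/-- The class of MSGs that are language-equivalent to some
local-choice MSG forms a proper subset of the class of MSGs that are
language-equivalent to some controllable-choice MSG. -/
theorem localChoice_equiv_ssubset_controllableChoice_equiv :
    {G : MSG ℕ Bool Bool | ∃ G' : MSG ℕ Bool Bool, G'.LocalChoice ∧ G.lang = G'.lang} ⊂
    {G : MSG ℕ Bool Bool | ∃ G' : MSG ℕ Bool Bool, G'.ControllableChoice ∧ G.lang = G'.lang} := by
  rw [ssubset_iff_subset_not_subset]
  constructor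
  · intro Gq hGq
    obtain ⟨G', h1, h2⟩ := hGq
    exact ⟨G', fun v hv => Or.inl (h1 v hv), h2⟩
  · intro hsub
    obtain ⟨G', hl, he⟩ := hsub ⟨GW, GW_controllable, rfl⟩
    exact GW_not_local G' hl he
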